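/- Let N be a near hexagon of order (2,2). Then there is a constant c ∈ {1,2} such that any two points of N at distance 2 from each other have exactly c common neighbors. -/

import Mathlib

/-- The collinearity graph of a point-line geometry whose lines are given as
sets of points: two points are adjacent when they are distinct and lie on a
common line. -/
def collGraph {P : Type*} (Lines : Set (Set P)) : SimpleGraph P where
  Adj x y := x ≠ y ∧ ∃ L ∈ Lines, x ∈ L ∧ y ∈ L
  symm := by
    constructor
    rintro x y ⟨hxy, L, hL, hx, hy⟩
    exact ⟨hxy.symm, L, hL, hy, hx⟩
  loopless := by
    constructor
    rintro x ⟨h, -⟩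
    exact h rfl

/-- A near `2d`-gon: a partial linear space (every line carries at least two
points, two distinct points lie on at most one common line) whose collinearity
graph is connected of diameter `d`, and in which for every point `x` and every
line `L` there is a unique point of `L` nearest to `x`.  A near hexagon is a
`NearPolygon P 3`, a near octagon is a `NearPolygon P 4`. -/
structure NearPolygon (P : Type*) (d : ℕ) where
  Lines : Set (Set P)
  two_pts : ∀ L ∈ Lines, ∃ x ∈ L, ∃ y ∈ L, x ≠ y
  unique_line : ∀ L₁ ∈ Lines, ∀ L₂ ∈ Lines, ∀ x y : P,
    x ≠ y → x ∈ L₁ → y ∈ L₁ → x ∈ L₂ → y ∈ L₂ → L₁ = L₂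
  connected : (collGraph Lines).Connected
  diam_le : ∀ x y : P, (collGraph Lines).dist x y ≤ d
  diam_eq : ∃ x y : P, (collGraph Lines).dist x y = d
  near : ∀ (x : P), ∀ L ∈ Lines, ∃! y, y ∈ L ∧
    ∀ z ∈ L, (collGraph Lines).dist x y ≤ (collGraph Lines).dist x z

/-- A near polygon has order `(s,t)` if every line is incident with exactly
`s+1` points and every point is incident with exactly `t+1` lines. -/
def NearPolygon.hasOrder {P : Type*} {d : ℕ} (N : NearPolygon P d) (s t : ℕ) : Prop :=
  (∀ L ∈ N.Lines, L.ncard = s + 1) ∧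
  (∀ x : P, {L | L ∈ N.Lines ∧ x ∈ L}.ncard = t + 1)

/-- A semi-valuation: every line `L` contains a unique point `xL` such that
every other point of `L` has value `f xL + 1`. -/
def IsSemiValuation {P : Type*} (Lines : Set (Set P)) (f : P → ℤ) : Prop :=
  ∀ L ∈ Lines, ∃! xL, xL ∈ L ∧ ∀ x ∈ L, x ≠ xL → f x = f xL + 1

/-- A valuation: a semi-valuation whose minimum value is `0`. -/
def IsValuation {P : Type*} (Lines : Set (Set P)) (f : P → ℤ) : Prop :=
  IsSemiValuation Lines f ∧ (∀ x, 0 ≤ f x) ∧ (∃ x, f x = 0)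

/-- `ι` realizes the geometry with lines `LQ` as a full isometrically embedded
subgeometry of the geometry with lines `LP` (lines being identified with their
point sets, fullness amounts to lines mapping onto lines). -/
structure IsFullIsomEmb {Q P : Type*} (LQ : Set (Set Q)) (LP : Set (Set P))
    (ι : Q → P) : Prop where
  inj : Function.Injective ι
  line_map : ∀ L ∈ LQ, ι '' L ∈ LP
  isometric : ∀ x y : Q, (collGraph LP).dist (ι x) (ι y) = (collGraph LQ).dist x y

/-- The distance `d(x, P)` from a point `x` of the ambient geometry to the
point set of the embedded subgeometry. -/
noncomputable def distToSub {Q P : Type*} (LP : Set (Set P)) (ι : Q → P) (x : P) : ℕ :=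
  sInf (Set.range fun z : Q => (collGraph LP).dist x (ι z))

/-- The function `f_x : y ↦ d(x, y) - d(x, P)` induced on the embedded
subgeometry by a point `x` of the ambient geometry. -/
noncomputable def inducedVal {Q P : Type*} (LP : Set (Set P)) (ι : Q → P) (x : P) :
    Q → ℤ :=
  fun y => ((collGraph LP).dist x (ι y) : ℤ) - (distToSub LP ι x : ℤ)

/-- Two valuations are neighboring if `|f1 x - f2 x + ε| ≤ 1` for all `x`,
for some integer `ε`. -/
def Neighboring {P : Type*} (f1 f2 : P → ℤ) : Prop :=
  ∃ ε : ℤ, ∀ x, |f1 x - f2 x + ε| ≤ 1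

/-- The semi-valuation `f3'` built from two neighboring valuations `f1, f2`
and a compatible `ε`. -/
def starFun {P : Type*} (f1 f2 : P → ℤ) (ε : ℤ) (x : P) : ℤ :=
  if f1 x = f2 x - ε then f1 x - 1 else max (f1 x) (f2 x - ε)

/-- `StarRel f1 f2 f3` expresses `f1 * f2 = f3`: some `ε ∈ {-1,0,1}` witnesses
that `f1` and `f2` are neighboring, and, for every such `ε`, subtracting the
minimum value `m` of `f3' = starFun f1 f2 ε` from `f3'` yields `f3`. -/
def StarRel {P : Type*} (f1 f2 f3 : P → ℤ) : Prop :=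
  (∃ ε ∈ ({-1, 0, 1} : Set ℤ), ∀ x, |f1 x - f2 x + ε| ≤ 1) ∧
  ∀ ε ∈ ({-1, 0, 1} : Set ℤ), (∀ x, |f1 x - f2 x + ε| ≤ 1) →
    ∃ m : ℤ, IsLeast (Set.range (starFun f1 f2 ε)) m ∧
      ∀ x, f3 x = starFun f1 f2 ε x - m

/-- A subspace: together with two distinct collinear points it contains every
line through them. -/
def IsSubspace {P : Type*} (Lines : Set (Set P)) (X : Set P) : Prop :=
  ∀ L ∈ Lines, ∀ x ∈ L, ∀ y ∈ L, x ≠ y → x ∈ X → y ∈ X → L ⊆ X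

/-- A convex subspace: a subspace containing every point on a shortest path
between any two of its points. -/
def IsConvexSubspace {P : Type*} (Lines : Set (Set P)) (X : Set P) : Prop :=
  IsSubspace Lines X ∧
  ∀ x ∈ X, ∀ y ∈ X, ∀ z : P,
    (collGraph Lines).dist x z + (collGraph Lines).dist z y
      = (collGraph Lines).dist x y → z ∈ X

/-- A quad: a convex subspace of diameter `2` inducing (with the lines fully
contained in it) a nondegenerate generalized quadrangle. -/
def IsQuad {P : Type*} (Lines : Set (Set P)) (Q : Set P) : Prop :=
  IsConvexSubspace Lines Q ∧
  (∀ x ∈ Q, ∀ y ∈ Q, (collGraph Lines).dist x y ≤ 2) ∧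
  (∃ x ∈ Q, ∃ y ∈ Q, (collGraph Lines).dist x y = 2) ∧
  (∀ x ∈ Q, ∀ L ∈ Lines, L ⊆ Q → x ∉ L →
    ∃! y, y ∈ L ∧ (collGraph Lines).Adj x y) ∧
  (∀ x ∈ Q, ∃ L₁ ∈ Lines, ∃ L₂ ∈ Lines,
    L₁ ⊆ Q ∧ L₂ ⊆ Q ∧ x ∈ L₁ ∧ x ∈ L₂ ∧ L₁ ≠ L₂) ∧
  (∃ x ∈ Q, ∃ y ∈ Q, x ≠ y ∧ ¬ (collGraph Lines).Adj x y)

/-- A quad has order `(s,t')` if each of its lines has `s+1` points and each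
of its points is on exactly `t'+1` lines contained in the quad. -/
def QuadHasOrder {P : Type*} (Lines : Set (Set P)) (Q : Set P) (s t' : ℕ) : Prop :=
  (∀ L ∈ Lines, L ⊆ Q → L.ncard = s + 1) ∧
  (∀ x ∈ Q, {L | L ∈ Lines ∧ L ⊆ Q ∧ x ∈ L}.ncard = t' + 1)

namespace NearHex

open SimpleGraph Set

variable {P : Type*} {Ls : Set (Set P)}

/-- Bundled hypotheses extracted from a near hexagon of order (2,2). -/
structure Setup (Ls : Set (Set P)) : Prop where
  uniq : ∀ L₁ ∈ Ls, ∀ L₂ ∈ Ls, ∀ x y : P,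
    x ≠ y → x ∈ L₁ → y ∈ L₁ → x ∈ L₂ → y ∈ L₂ → L₁ = L₂
  conn : (collGraph Ls).Connected
  diam : ∀ x y : P, (collGraph Ls).dist x y ≤ 3
  near : ∀ x : P, ∀ L ∈ Ls, ∃! y, y ∈ L ∧
    ∀ z ∈ L, (collGraph Ls).dist x y ≤ (collGraph Ls).dist x z
  card3 : ∀ L ∈ Ls, L.ncard = 3
  thru3 : ∀ x : P, {L | L ∈ Ls ∧ x ∈ L}.ncard = 3

lemma adj_of_mem {L : Set P} (hL : L ∈ Ls) {x y : P} (hx : x ∈ L) (hy : y ∈ L)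
    (hxy : x ≠ y) : (collGraph Ls).Adj x y := ⟨hxy, L, hL, hx, hy⟩

lemma dist_adj (S : Setup Ls) {x y : P} (h : (collGraph Ls).Adj x y) :
    (collGraph Ls).dist x y = 1 := dist_eq_one_iff_adj.mpr h

lemma adj_of_dist_one {x y : P} (h : (collGraph Ls).dist x y = 1) :
    (collGraph Ls).Adj x y := dist_eq_one_iff_adj.mp h

lemma eq_of_dist_zero (S : Setup Ls) {x y : P} (h : (collGraph Ls).dist x y = 0) :
    x = y := (S.conn.dist_eq_zero_iff).mp h

lemma dist_triangle' (S : Setup Ls) (x y z : P) :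
    (collGraph Ls).dist x z ≤ (collGraph Ls).dist x y + (collGraph Ls).dist y z :=
  S.conn.dist_triangle

/-- extract the three (distinct) points of a line. -/
lemma line_three (S : Setup Ls) {L : Set P} (hL : L ∈ Ls) :
    ∃ a b c : P, a ≠ b ∧ a ≠ c ∧ b ≠ c ∧ L = {a, b, c} :=
  Set.ncard_eq_three.mp (S.card3 L hL)

/-- a line containing three given distinct points equals the set of those. -/
lemma line_eq_of_mem (S : Setup Ls) {L : Set P} (hL : L ∈ Ls) {p q r : P}
    (hp : p ∈ L) (hq : q ∈ L) (hr : r ∈ L)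
    (hpq : p ≠ q) (hpr : p ≠ r) (hqr : q ≠ r) : L = {p, q, r} := by
  have hsub : ({p, q, r} : Set P) ⊆ L := by
    intro z hz; rcases hz with rfl | rfl | rfl <;> assumption
  have hfin : L.Finite := by
    by_contra h
    have := Set.Infinite.ncard h
    rw [S.card3 L hL] at this; omega
  have hcard : ({p, q, r} : Set P).ncard = 3 := by
    rw [Set.ncard_insert_of_notMem (by simp [hpq, hpr]), Set.ncard_insert_of_notMem (by simp [hqr]),
      Set.ncard_singleton]
  exact (Set.eq_of_subset_of_ncard_le hsub (by rw [hcard, S.card3 L hL]) hfin).symm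

/-- given two distinct points of a line, get the third. -/
lemma line_third (S : Setup Ls) {L : Set P} (hL : L ∈ Ls) {x y : P}
    (hx : x ∈ L) (hy : y ∈ L) (hxy : x ≠ y) :
    ∃ r, r ∈ L ∧ r ≠ x ∧ r ≠ y ∧ L = {x, y, r} := by
  obtain ⟨a, b, c, hab, hac, hbc, rfl⟩ := line_three S hL
  simp only [Set.mem_insert_iff, Set.mem_singleton_iff] at hx hy
  rcases hx with rfl | rfl | rfl <;> rcases hy with rfl | rfl | rfl
  · exact absurd rfl hxy
  · exact ⟨c, by simp, by tauto, by tauto,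
      by ext z; simp only [Set.mem_insert_iff, Set.mem_singleton_iff]; try tauto⟩
  · exact ⟨b, by simp, by tauto, by tauto,
      by ext z; simp only [Set.mem_insert_iff, Set.mem_singleton_iff]; try tauto⟩
  · exact ⟨c, by simp, by tauto, by tauto,
      by ext z; simp only [Set.mem_insert_iff, Set.mem_singleton_iff]; try tauto⟩
  · exact absurd rfl hxy
  · exact ⟨a, by simp, by tauto, by tauto,
      by ext z; simp only [Set.mem_insert_iff, Set.mem_singleton_iff]; try tauto⟩
  · exact ⟨b, by simp, by tauto, by tauto,
      by ext z; simp only [Set.mem_insert_iff, Set.mem_singleton_iff]; try tauto⟩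
  · exact ⟨a, by simp, by tauto, by tauto,
      by ext z; simp only [Set.mem_insert_iff, Set.mem_singleton_iff]; try tauto⟩
  · exact absurd rfl hxy

/-- The near polygon axiom, structural form: on every line there is a point `m`
such that every other point of the line is at distance `d(x,m)+1` from `x`. -/
lemma pattern (S : Setup Ls) (x : P) {L : Set P} (hL : L ∈ Ls) :
    ∃ m ∈ L, ∀ p ∈ L, p ≠ m →
      (collGraph Ls).dist x p = (collGraph Ls).dist x m + 1 := by
  obtain ⟨m, ⟨hmL, hmin⟩, huni⟩ := S.near x L hL
  refine ⟨m, hmL, fun p hp hpm => ?_⟩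
  have h1 : (collGraph Ls).dist x p ≤ (collGraph Ls).dist x m + 1 := by
    have hadj : (collGraph Ls).Adj m p := adj_of_mem hL hmL hp (Ne.symm hpm)
    have := dist_triangle' S x m p
    rw [dist_adj S hadj] at this; exact this
  have h2 : (collGraph Ls).dist x m ≤ (collGraph Ls).dist x p := hmin p hp
  have h3 : (collGraph Ls).dist x p ≠ (collGraph Ls).dist x m := by
    intro he
    exact hpm (huni p ⟨hp, fun z hz => he ▸ hmin z hz⟩)
  omega

/-- Key tool: if two distinct points of a line are equidistant from `x`, then
the third point of the line is one step closer. -/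
lemma third_closer (S : Setup Ls) {L : Set P} (hL : L ∈ Ls) {p q r : P}
    (hp : p ∈ L) (hq : q ∈ L) (hr : r ∈ L)
    (hpq : p ≠ q) (hpr : p ≠ r) (hqr : q ≠ r) (x : P)
    (h : (collGraph Ls).dist x p = (collGraph Ls).dist x q) :
    (collGraph Ls).dist x p = (collGraph Ls).dist x r + 1 := by
  obtain ⟨m, hmL, hpat⟩ := pattern S x hL
  have hLeq := line_eq_of_mem S hL hp hq hr hpq hpr hqr
  have hm3 : m = p ∨ m = q ∨ m = r := by
    have := hmL; rw [hLeq] at this; simpa using this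
  rcases hm3 with rfl | rfl | rfl
  · have := hpat q hq (Ne.symm hpq); omega
  · have := hpat p hp hpq; omega
  · exact hpat p hp hpr

/-- three pairwise adjacent points lie on a common line. -/
lemma triangle_line (S : Setup Ls) {x y z : P}
    (hxy : (collGraph Ls).Adj x y) (hxz : (collGraph Ls).Adj x z)
    (hyz : (collGraph Ls).Adj y z) :
    ∀ L ∈ Ls, x ∈ L → y ∈ L → z ∈ L := by
  intro L hL hx hy
  obtain ⟨r, hrL, hrx, hry, hLeq⟩ := line_third S hL hx hy hxy.ne
  by_cases hzr : z = r
  · exact hzr ▸ hrL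
  have hd : (collGraph Ls).dist z x = (collGraph Ls).dist z y := by
    rw [dist_adj S hxz.symm, dist_adj S hyz.symm]
  have h := third_closer S hL hx hy hrL hxy.ne (fun h' => hrx h'.symm)
    (fun h' => hry h'.symm) z hd
  rw [dist_adj S hxz.symm] at h
  have : (collGraph Ls).dist z r = 0 := by omega
  exact absurd (eq_of_dist_zero S this) hzr

end NearHex
namespace NearHex

open SimpleGraph Set

variable {P : Type*} {Ls : Set (Set P)}

/-- the three lines through a point. -/
lemma thru_lines (S : Setup Ls) (x : P) :
    ∃ L₁ L₂ L₃ : Set P, L₁ ∈ Ls ∧ L₂ ∈ Ls ∧ L₃ ∈ Ls ∧ x ∈ L₁ ∧ x ∈ L₂ ∧ x ∈ L₃ ∧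
      L₁ ≠ L₂ ∧ L₁ ≠ L₃ ∧ L₂ ≠ L₃ ∧
      ∀ L ∈ Ls, x ∈ L → L = L₁ ∨ L = L₂ ∨ L = L₃ := by
  obtain ⟨A, B, C, hAB, hAC, hBC, h⟩ := Set.ncard_eq_three.mp (S.thru3 x)
  have hA : A ∈ Ls ∧ x ∈ A := by
    have : A ∈ {L | L ∈ Ls ∧ x ∈ L} := by rw [h]; simp
    exact this
  have hB : B ∈ Ls ∧ x ∈ B := by
    have : B ∈ {L | L ∈ Ls ∧ x ∈ L} := by rw [h]; simp
    exact this
  have hC : C ∈ Ls ∧ x ∈ C := by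
    have : C ∈ {L | L ∈ Ls ∧ x ∈ L} := by rw [h]; simp
    exact this
  refine ⟨A, B, C, hA.1, hB.1, hC.1, hA.2, hB.2, hC.2, hAB, hAC, hBC, ?_⟩
  intro L hL hx
  have : L ∈ {L | L ∈ Ls ∧ x ∈ L} := ⟨hL, hx⟩
  rw [h] at this
  simpa using this

lemma exists_line_adj {x y : P} (h : (collGraph Ls).Adj x y) :
    ∃ L ∈ Ls, x ∈ L ∧ y ∈ L := h.2

lemma line_unique (S : Setup Ls) {L₁ L₂ : Set P} (h₁ : L₁ ∈ Ls) (h₂ : L₂ ∈ Ls)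
    {x y : P} (hxy : x ≠ y) (hx1 : x ∈ L₁) (hy1 : y ∈ L₁) (hx2 : x ∈ L₂)
    (hy2 : y ∈ L₂) : L₁ = L₂ :=
  S.uniq L₁ h₁ L₂ h₂ x y hxy hx1 hy1 hx2 hy2

/-- a geodesic first step. -/
lemma exists_mid (S : Setup Ls) {x y : P} {n : ℕ}
    (h : (collGraph Ls).dist x y = n + 1) :
    ∃ z, (collGraph Ls).Adj x z ∧ (collGraph Ls).dist z y = n := by
  have hr : (collGraph Ls).Reachable x y := S.conn.preconnected x y
  obtain ⟨p, hp⟩ := hr.exists_walk_length_eq_dist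
  cases p with
  | nil => rw [h] at hp; simp at hp
  | cons hadj q =>
    rename_i z
    refine ⟨z, hadj, ?_⟩
    have hq : (collGraph Ls).dist z y ≤ q.length := dist_le q
    have hlen : q.length + 1 = n + 1 := by
      rw [h] at hp; simpa [Walk.length_cons] using hp
    have ht : (collGraph Ls).dist x y ≤ 1 + (collGraph Ls).dist z y := by
      have := dist_triangle' S x z y
      rwa [dist_adj S hadj] at this
    omega

lemma common_of_dist_two (S : Setup Ls) {x y : P}
    (h : (collGraph Ls).dist x y = 2) :
    ∃ z, (collGraph Ls).Adj x z ∧ (collGraph Ls).Adj z y := by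
  obtain ⟨z, hz, hd⟩ := exists_mid S (by rw [h] : (collGraph Ls).dist x y = 1 + 1)
  exact ⟨z, hz, adj_of_dist_one hd⟩

lemma not_adj_of_dist_two (S : Setup Ls) {x y : P}
    (h : (collGraph Ls).dist x y = 2) : ¬ (collGraph Ls).Adj x y := by
  intro ha; rw [dist_adj S ha] at h; omega

lemma dist_two_of_common (S : Setup Ls) {x y z : P} (hne : x ≠ y)
    (hna : ¬ (collGraph Ls).Adj x y) (h1 : (collGraph Ls).Adj x z)
    (h2 : (collGraph Ls).Adj z y) : (collGraph Ls).dist x y = 2 := by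
  have hle : (collGraph Ls).dist x y ≤ 2 := by
    have := dist_triangle' S x z y
    rw [dist_adj S h1, dist_adj S h2] at this; omega
  have h0 : (collGraph Ls).dist x y ≠ 0 := fun hh => hne (eq_of_dist_zero S hh)
  have h1' : (collGraph Ls).dist x y ≠ 1 := fun hh => hna (adj_of_dist_one hh)
  omega

/-- two common neighbours of points at distance two are non-adjacent. -/
lemma common_nonadj (S : Setup Ls) {x y z z' : P}
    (h : (collGraph Ls).dist x y = 2)
    (h1 : (collGraph Ls).Adj x z) (h2 : (collGraph Ls).Adj z y)
    (h1' : (collGraph Ls).Adj x z') (h2' : (collGraph Ls).Adj z' y)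
    (hne : z ≠ z') : ¬ (collGraph Ls).Adj z z' := by
  intro ha
  obtain ⟨L, hL, hzL, hz'L⟩ := exists_line_adj ha
  have hxL : x ∈ L := triangle_line S ha h1.symm h1'.symm L hL hzL hz'L
  have hyL : y ∈ L := triangle_line S ha h2 h2' L hL hzL hz'L
  exact not_adj_of_dist_two S h (adj_of_mem hL hxL hyL (fun he => by
    rw [he] at h; rw [dist_self] at h; omega))

/-- no line contains a point `x` and two distinct common neighbours of `x,y`. -/
lemma common_line_inj (S : Setup Ls) {x y z z' : P}
    (h : (collGraph Ls).dist x y = 2)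
    (h1 : (collGraph Ls).Adj x z) (h2 : (collGraph Ls).Adj z y)
    (h1' : (collGraph Ls).Adj x z') (h2' : (collGraph Ls).Adj z' y)
    (hne : z ≠ z') : ∀ L ∈ Ls, z ∈ L → z' ∈ L → x ∉ L ∧ y ∉ L := by
  intro L hL hzL hz'L
  constructor
  · intro hxL
    exact common_nonadj S h h1 h2 h1' h2' hne (adj_of_mem hL hzL hz'L hne)
  · intro hyL
    exact common_nonadj S h h1 h2 h1' h2' hne (adj_of_mem hL hzL hz'L hne)

lemma line_finite (S : Setup Ls) {L : Set P} (hL : L ∈ Ls) : L.Finite := by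
  by_contra h
  have := Set.Infinite.ncard h
  rw [S.card3 L hL] at this; omega

lemma nbrs_finite (S : Setup Ls) (x : P) : {y | (collGraph Ls).Adj x y}.Finite := by
  obtain ⟨A, B, C, hA, hB, hC, hxA, hxB, hxC, _, _, _, hall⟩ := thru_lines S x
  have hsub : {y | (collGraph Ls).Adj x y} ⊆ A ∪ B ∪ C := by
    intro y hy
    obtain ⟨L, hL, hxL, hyL⟩ := exists_line_adj hy
    rcases hall L hL hxL with rfl | rfl | rfl
    · exact Or.inl (Or.inl hyL)
    · exact Or.inl (Or.inr hyL)
    · exact Or.inr hyL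
  exact Set.Finite.subset (((line_finite S hA).union (line_finite S hB)).union
    (line_finite S hC)) hsub

lemma ball_finite (S : Setup Ls) (n : ℕ) (x : P) :
    {y | (collGraph Ls).dist x y ≤ n}.Finite := by
  induction n with
  | zero =>
    have : {y | (collGraph Ls).dist x y ≤ 0} ⊆ {x} := by
      intro y hy
      simp only [Set.mem_setOf_eq, Nat.le_zero] at hy
      exact ((eq_of_dist_zero S hy).symm : y = x)
    exact Set.Finite.subset (Set.finite_singleton x) this
  | succ n ih =>
    have hsub : {y | (collGraph Ls).dist x y ≤ n + 1} ⊆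
        {y | (collGraph Ls).dist x y ≤ n} ∪
        ⋃ z ∈ {y | (collGraph Ls).dist x y ≤ n}, {w | (collGraph Ls).Adj z w} := by
      intro y hy
      simp only [Set.mem_setOf_eq] at hy
      by_cases hle : (collGraph Ls).dist x y ≤ n
      · exact Or.inl hle
      · have heq : (collGraph Ls).dist x y = n + 1 := by omega
        have heq' : (collGraph Ls).dist y x = n + 1 := by rwa [dist_comm] at heq
        obtain ⟨z, hz, hd⟩ := exists_mid S heq'
        refine Or.inr ?_
        simp only [Set.mem_iUnion, Set.mem_setOf_eq]
        exact ⟨z, le_of_eq (by rwa [dist_comm] at hd), hz.symm⟩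
    refine Set.Finite.subset (ih.union (Set.Finite.biUnion ih (fun z _ => nbrs_finite S z))) hsub

lemma finite_P (S : Setup Ls) : Finite P := by
  obtain ⟨x⟩ := S.conn.nonempty
  have : (Set.univ : Set P) ⊆ {y | (collGraph Ls).dist x y ≤ 3} := fun y _ => S.diam x y
  have := Set.Finite.subset (ball_finite S 3 x) this
  rwa [Set.finite_univ_iff] at this

end NearHex
namespace NearHex

open SimpleGraph Set

variable {P : Type*} {Ls : Set (Set P)}

/-- A `3×3` grid subgeometry: rows and columns are lines, entries distinct. -/
def GridData (Ls : Set (Set P)) (p : Fin 3 → Fin 3 → P) : Prop :=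
  (∀ i : Fin 3, ∃ L ∈ Ls, L = {p i 0, p i 1, p i 2}) ∧
  (∀ j : Fin 3, ∃ L ∈ Ls, L = {p 0 j, p 1 j, p 2 j}) ∧
  (∀ i j i' j' : Fin 3, p i j = p i' j' → i = i' ∧ j = j')

lemma triple_perm {α : Type*} (f : Fin 3 → α) (τ : Equiv.Perm (Fin 3)) :
    ({f (τ 0), f (τ 1), f (τ 2)} : Set α) = {f 0, f 1, f 2} := by
  have h1 : ∀ g : Fin 3 → α, ({g 0, g 1, g 2} : Set α) = Set.range g := by
    intro g; ext z
    simp only [Set.mem_insert_iff, Set.mem_singleton_iff, Set.mem_range]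
    constructor
    · rintro (rfl | rfl | rfl) <;> exact ⟨_, rfl⟩
    · rintro ⟨i, rfl⟩; fin_cases i <;> simp
  have h2 : ({f (τ 0), f (τ 1), f (τ 2)} : Set α) = Set.range (f ∘ τ) := h1 (f ∘ τ)
  rw [h2, h1 f, Set.range_comp, Equiv.range_eq_univ, Set.image_univ]

lemma GridData.perm {p : Fin 3 → Fin 3 → P} (h : GridData Ls p)
    (σ τ : Equiv.Perm (Fin 3)) : GridData Ls (fun i j => p (σ i) (τ j)) := by
  obtain ⟨hrow, hcol, hinj⟩ := h
  refine ⟨?_, ?_, ?_⟩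
  · intro i
    obtain ⟨L, hL, hLe⟩ := hrow (σ i)
    exact ⟨L, hL, by rw [hLe, ← triple_perm (fun j => p (σ i) j) τ]⟩
  · intro j
    obtain ⟨L, hL, hLe⟩ := hcol (τ j)
    exact ⟨L, hL, by rw [hLe, ← triple_perm (fun i => p i (τ j)) σ]⟩
  · intro i j i' j' he
    obtain ⟨h1, h2⟩ := hinj _ _ _ _ he
    exact ⟨σ.injective h1, τ.injective h2⟩

lemma GridData.transpose {p : Fin 3 → Fin 3 → P} (h : GridData Ls p) :
    GridData Ls (fun i j => p j i) := by
  obtain ⟨hrow, hcol, hinj⟩ := h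
  exact ⟨hcol, hrow, fun i j i' j' he => ⟨(hinj _ _ _ _ he).2, (hinj _ _ _ _ he).1⟩⟩

lemma GridData.ne {p : Fin 3 → Fin 3 → P} (h : GridData Ls p)
    {i j i' j' : Fin 3} (hne : ¬ (i = i' ∧ j = j')) : p i j ≠ p i' j' :=
  fun he => hne (h.2.2 _ _ _ _ he)

lemma GridData.adj_row (h : GridData Ls p) {i j j' : Fin 3} (hj : j ≠ j') :
    (collGraph Ls).Adj (p i j) (p i j') := by
  obtain ⟨L, hL, hLe⟩ := h.1 i
  have hm : ∀ k : Fin 3, p i k ∈ L := by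
    intro k; rw [hLe]; fin_cases k <;> simp
  exact adj_of_mem hL (hm j) (hm j') (h.ne (fun hc => hj hc.2))

lemma GridData.adj_col (h : GridData Ls p) {i i' j : Fin 3} (hi : i ≠ i') :
    (collGraph Ls).Adj (p i j) (p i' j) := by
  obtain ⟨L, hL, hLe⟩ := h.2.1 j
  have hm : ∀ k : Fin 3, p k j ∈ L := by
    intro k; rw [hLe]; fin_cases k <;> simp
  exact adj_of_mem hL (hm i) (hm i') (h.ne (fun hc => hi hc.1))

lemma exists_perm_two : ∀ i i' : Fin 3, i ≠ i' →
    ∃ σ : Equiv.Perm (Fin 3), σ 0 = i ∧ σ 1 = i' := by decide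

lemma GridData.not_adj_diag (S : Setup Ls) {p : Fin 3 → Fin 3 → P}
    (h : GridData Ls p) {i j i' j' : Fin 3} (hi : i ≠ i') (hj : j ≠ j') :
    ¬ (collGraph Ls).Adj (p i j) (p i' j') := by
  -- reduce to the canonical case via permutations
  obtain ⟨σ, hσ0, hσ1⟩ := exists_perm_two i i' hi
  obtain ⟨τ, hτ0, hτ1⟩ := exists_perm_two j j' hj
  have h' := h.perm σ τ
  -- canonical case for h' : positions (0,0) and (1,1)
  have key : ∀ q : Fin 3 → Fin 3 → P, GridData Ls q →
      ¬ (collGraph Ls).Adj (q 0 0) (q 1 1) := by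
    intro q hq hadj
    obtain ⟨L, hL, h00, h11⟩ := exists_line_adj hadj
    have h01 : q 0 1 ∈ L := by
      refine triangle_line S hadj (hq.adj_row (by decide)) ?_ L hL h00 h11
      exact hq.adj_col (by decide)
    have h10 : q 1 0 ∈ L := by
      refine triangle_line S hadj (hq.adj_col (by decide)) ?_ L hL h00 h11
      exact hq.adj_row (by decide)
    have hLeq := line_eq_of_mem S hL h00 h11 h01
      (hq.ne (by decide)) (hq.ne (by decide)) (hq.ne (by decide))
    rw [hLeq] at h10
    simp only [Set.mem_insert_iff, Set.mem_singleton_iff] at h10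
    rcases h10 with he | he | he
    · exact (hq.ne (by decide)) he
    · exact (hq.ne (by decide)) he
    · exact (hq.ne (by decide)) he
  have := key _ h'
  rwa [hσ0, hσ1, hτ0, hτ1] at this

lemma GridData.dist_diag (S : Setup Ls) {p : Fin 3 → Fin 3 → P}
    (h : GridData Ls p) {i j i' j' : Fin 3} (hi : i ≠ i') (hj : j ≠ j') :
    (collGraph Ls).dist (p i j) (p i' j') = 2 := by
  refine dist_two_of_common S (h.ne (fun hc => hi hc.1)) (h.not_adj_diag S hi hj)
    (h.adj_row hj) ?_
  exact h.adj_col hi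

end NearHex
namespace NearHex

open SimpleGraph Set

variable {P : Type*} {Ls : Set (Set P)}

lemma ne_of_dist_two {x y : P} (h : (collGraph Ls).dist x y = 2) : x ≠ y := by
  intro he; rw [he, dist_self] at h; omega

/-- on a line `{u,v,w}`, distances `d(q,u)=d(q,v)=1` force `q = w`. -/
lemma eq_third_of_ones (S : Setup Ls) {L : Set P} (hL : L ∈ Ls) {u v w : P}
    (hu : u ∈ L) (hv : v ∈ L) (hw : w ∈ L) (huv : u ≠ v) (huw : u ≠ w)
    (hvw : v ≠ w) {q : P} (h1 : (collGraph Ls).dist q u = 1)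
    (h2 : (collGraph Ls).dist q v = 1) : q = w := by
  have := third_closer S hL hu hv hw huv huw hvw q (by rw [h1, h2])
  exact eq_of_dist_zero S (by omega)

/-- on a line `{u,v,w}`, distances `d(q,u)=1, d(q,v)=2` force `d(q,w)=2`. -/
lemma one_two_two (S : Setup Ls) {L : Set P} (hL : L ∈ Ls) {u v w : P}
    (hu : u ∈ L) (hv : v ∈ L) (hw : w ∈ L) (huv : u ≠ v) (huw : u ≠ w)
    (hvw : v ≠ w) {q : P} (h1 : (collGraph Ls).dist q u = 1)
    (h2 : (collGraph Ls).dist q v = 2) : (collGraph Ls).dist q w = 2 := by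
  obtain ⟨m, hm, hpat⟩ := pattern S q hL
  have hLeq := line_eq_of_mem S hL hu hv hw huv huw hvw
  rw [hLeq] at hm
  simp only [Set.mem_insert_iff, Set.mem_singleton_iff] at hm
  rcases hm with rfl | rfl | rfl
  · have := hpat w hw (Ne.symm huw); omega
  · have := hpat u hu huv; omega
  · have hu' := hpat u hu huw
    have hv' := hpat v hv hvw
    omega

/-- on a line `{u,v,w}`, distances `d(q,u)=d(q,v)=2` give `q` adjacent `w`. -/
lemma adj_of_twos (S : Setup Ls) {L : Set P} (hL : L ∈ Ls) {u v w : P}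
    (hu : u ∈ L) (hv : v ∈ L) (hw : w ∈ L) (huv : u ≠ v) (huw : u ≠ w)
    (hvw : v ≠ w) {q : P} (h1 : (collGraph Ls).dist q u = 2)
    (h2 : (collGraph Ls).dist q v = 2) : (collGraph Ls).Adj q w := by
  have := third_closer S hL hu hv hw huv huw hvw q (by rw [h1, h2])
  exact adj_of_dist_one (by omega)

set_option maxHeartbeats 2000000 in
/-- The Shult–Yanushka grid construction: two points at distance two with two
distinct common neighbours lie in a `3×3` grid. -/
lemma grid_of_two_common (S : Setup Ls) {x y z₁ z₂ : P}
    (hxy : (collGraph Ls).dist x y = 2)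
    (h1 : (collGraph Ls).Adj x z₁) (h1' : (collGraph Ls).Adj z₁ y)
    (h2 : (collGraph Ls).Adj x z₂) (h2' : (collGraph Ls).Adj z₂ y)
    (hz : z₁ ≠ z₂) :
    ∃ p : Fin 3 → Fin 3 → P, GridData Ls p ∧
      p 0 0 = x ∧ p 1 1 = y ∧ p 0 1 = z₁ ∧ p 1 0 = z₂ := by
  have hnxy : ¬ (collGraph Ls).Adj x y := not_adj_of_dist_two S hxy
  have hxyne : x ≠ y := ne_of_dist_two hxy
  have hnz : ¬ (collGraph Ls).Adj z₁ z₂ := common_nonadj S hxy h1 h1' h2 h2' hz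
  have hd12 : (collGraph Ls).dist z₁ z₂ = 2 :=
    dist_two_of_common S hz hnz h1.symm h2
  -- the four lines
  obtain ⟨L₁, hL₁, hxL₁, hz₁L₁⟩ := exists_line_adj h1
  obtain ⟨a₁, ha₁L₁, ha₁x, ha₁z₁, hL₁eq⟩ := line_third S hL₁ hxL₁ hz₁L₁ h1.ne
  obtain ⟨L₂, hL₂, hxL₂, hz₂L₂⟩ := exists_line_adj h2
  obtain ⟨a₂, ha₂L₂, ha₂x, ha₂z₂, hL₂eq⟩ := line_third S hL₂ hxL₂ hz₂L₂ h2.ne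
  obtain ⟨M₁, hM₁, hz₁M₁, hyM₁⟩ := exists_line_adj h1'
  obtain ⟨b₁, hb₁M₁, hb₁z₁, hb₁y, hM₁eq⟩ := line_third S hM₁ hz₁M₁ hyM₁ h1'.ne
  obtain ⟨M₂, hM₂, hz₂M₂, hyM₂⟩ := exists_line_adj h2'
  obtain ⟨b₂, hb₂M₂, hb₂z₂, hb₂y, hM₂eq⟩ := line_third S hM₂ hz₂M₂ hyM₂ h2'.ne
  -- memberships of excluded points
  have hyL₁ : y ∉ L₁ := fun hyL => hnxy (adj_of_mem hL₁ hxL₁ hyL hxyne)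
  have hyL₂ : y ∉ L₂ := fun hyL => hnxy (adj_of_mem hL₂ hxL₂ hyL hxyne)
  have hxM₁ : x ∉ M₁ := fun hxM => hnxy (adj_of_mem hM₁ hxM hyM₁ hxyne)
  have hxM₂ : x ∉ M₂ := fun hxM => hnxy (adj_of_mem hM₂ hxM hyM₂ hxyne)
  have hz₂nL₁ : z₂ ∉ L₁ := fun hmem => hnz (adj_of_mem hL₁ hz₁L₁ hmem hz)
  have hz₁nL₂ : z₁ ∉ L₂ := fun hmem => hnz (adj_of_mem hL₂ hmem hz₂L₂ hz)
  have hz₂nM₁ : z₂ ∉ M₁ := fun hmem => hnz (adj_of_mem hM₁ hz₁M₁ hmem hz)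
  have hz₁nM₂ : z₁ ∉ M₂ := fun hmem => hnz (adj_of_mem hM₂ hmem hz₂M₂ hz)
  have hL₁L₂ : L₁ ≠ L₂ := fun h => hz₁nL₂ (h ▸ hz₁L₁)
  have hM₁M₂ : M₁ ≠ M₂ := fun h => hz₁nM₂ (h ▸ hz₁M₁)
  have hL₁M₁ : L₁ ≠ M₁ := fun h => hxM₁ (h ▸ hxL₁)
  have hL₂M₂ : L₂ ≠ M₂ := fun h => hxM₂ (h ▸ hxL₂)
  -- basic adjacencies inside the four lines
  have hz₁a₁ : (collGraph Ls).Adj z₁ a₁ := adj_of_mem hL₁ hz₁L₁ ha₁L₁ (Ne.symm ha₁z₁)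
  have hz₂a₂ : (collGraph Ls).Adj z₂ a₂ := adj_of_mem hL₂ hz₂L₂ ha₂L₂ (Ne.symm ha₂z₂)
  have hxa₁ : (collGraph Ls).Adj x a₁ := adj_of_mem hL₁ hxL₁ ha₁L₁ (Ne.symm ha₁x)
  have hxa₂ : (collGraph Ls).Adj x a₂ := adj_of_mem hL₂ hxL₂ ha₂L₂ (Ne.symm ha₂x)
  have hz₁b₁ : (collGraph Ls).Adj z₁ b₁ := adj_of_mem hM₁ hz₁M₁ hb₁M₁ (Ne.symm hb₁z₁)
  have hz₂b₂ : (collGraph Ls).Adj z₂ b₂ := adj_of_mem hM₂ hz₂M₂ hb₂M₂ (Ne.symm hb₂z₂)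
  have hyb₁ : (collGraph Ls).Adj y b₁ := adj_of_mem hM₁ hyM₁ hb₁M₁ (Ne.symm hb₁y)
  have hyb₂ : (collGraph Ls).Adj y b₂ := adj_of_mem hM₂ hyM₂ hb₂M₂ (Ne.symm hb₂y)
  -- basic distances
  have hdyz₁ : (collGraph Ls).dist y z₁ = 1 := dist_adj S h1'.symm
  have hdyz₂ : (collGraph Ls).dist y z₂ = 1 := dist_adj S h2'.symm
  -- d(y, a₁) = 2, d(y, a₂) = 2
  have hya₁ : y ≠ a₁ := fun h => hyL₁ (h ▸ ha₁L₁)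
  have hnya₁ : ¬ (collGraph Ls).Adj y a₁ := by
    intro h
    have := third_closer S hL₁ hz₁L₁ ha₁L₁ hxL₁ (Ne.symm ha₁z₁)
      h1.ne' ha₁x y (by rw [hdyz₁, dist_adj S h])
    rw [hdyz₁, SimpleGraph.dist_comm, hxy] at this; omega
  have hdya₁ : (collGraph Ls).dist y a₁ = 2 :=
    dist_two_of_common S hya₁ hnya₁ h1'.symm hz₁a₁
  have hya₂ : y ≠ a₂ := fun h => hyL₂ (h ▸ ha₂L₂)
  have hnya₂ : ¬ (collGraph Ls).Adj y a₂ := by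
    intro h
    have := third_closer S hL₂ hz₂L₂ ha₂L₂ hxL₂ (Ne.symm ha₂z₂)
      h2.ne' ha₂x y (by rw [hdyz₂, dist_adj S h])
    rw [hdyz₂, SimpleGraph.dist_comm, hxy] at this; omega
  have hdya₂ : (collGraph Ls).dist y a₂ = 2 :=
    dist_two_of_common S hya₂ hnya₂ h2'.symm hz₂a₂
  -- d(x, b₁) = 2, d(x, b₂) = 2
  have hxb₁ : x ≠ b₁ := fun h => hxM₁ (h ▸ hb₁M₁)
  have hnxb₁ : ¬ (collGraph Ls).Adj x b₁ := by
    intro h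
    have := third_closer S hM₁ hz₁M₁ hb₁M₁ hyM₁ (Ne.symm hb₁z₁) h1'.ne
      hb₁y x (by rw [dist_adj S h1, dist_adj S h])
    rw [dist_adj S h1, hxy] at this; omega
  have hdxb₁ : (collGraph Ls).dist x b₁ = 2 :=
    dist_two_of_common S hxb₁ hnxb₁ h1 hz₁b₁
  have hxb₂ : x ≠ b₂ := fun h => hxM₂ (h ▸ hb₂M₂)
  have hnxb₂ : ¬ (collGraph Ls).Adj x b₂ := by
    intro h
    have := third_closer S hM₂ hz₂M₂ hb₂M₂ hyM₂ (Ne.symm hb₂z₂) h2'.ne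
      hb₂y x (by rw [dist_adj S h2, dist_adj S h])
    rw [dist_adj S h2, hxy] at this; omega
  have hdxb₂ : (collGraph Ls).dist x b₂ = 2 :=
    dist_two_of_common S hxb₂ hnxb₂ h2 hz₂b₂
  -- a₁ vs z₂, a₂ vs z₁
  have ha₁z₂ : a₁ ≠ z₂ := fun h => hz₂nL₁ (h ▸ ha₁L₁)
  have hna₁z₂ : ¬ (collGraph Ls).Adj a₁ z₂ := by
    intro h
    have heq : a₁ = a₂ := eq_third_of_ones S hL₂ hxL₂ hz₂L₂ ha₂L₂ h2.ne
      (Ne.symm ha₂x) (Ne.symm ha₂z₂) (dist_adj S hxa₁.symm) (dist_adj S h)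
    exact hL₁L₂ (line_unique S hL₁ hL₂ ha₁x ha₁L₁ hxL₁ (by rw [heq]; exact ha₂L₂) hxL₂)
  have hda₁z₂ : (collGraph Ls).dist a₁ z₂ = 2 :=
    dist_two_of_common S ha₁z₂ hna₁z₂ hxa₁.symm h2
  have ha₂z₁ : a₂ ≠ z₁ := fun h => hz₁nL₂ (h ▸ ha₂L₂)
  have hna₂z₁ : ¬ (collGraph Ls).Adj a₂ z₁ := by
    intro h
    have heq : a₂ = a₁ := eq_third_of_ones S hL₁ hxL₁ hz₁L₁ ha₁L₁ h1.ne
      (Ne.symm ha₁x) (Ne.symm ha₁z₁) (dist_adj S hxa₂.symm) (dist_adj S h)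
    exact hL₁L₂ (line_unique S hL₁ hL₂ ha₁x ha₁L₁ hxL₁ (by rw [← heq]; exact ha₂L₂) hxL₂)
  have hda₂z₁ : (collGraph Ls).dist a₂ z₁ = 2 :=
    dist_two_of_common S ha₂z₁ hna₂z₁ hxa₂.symm h1
  -- z₁ vs b₂, z₂ vs b₁
  have hz₁b₂ : z₁ ≠ b₂ := fun h => hz₁nM₂ (h ▸ hb₂M₂)
  have hnz₁b₂ : ¬ (collGraph Ls).Adj z₁ b₂ := by
    intro h
    exact hz (eq_third_of_ones S hM₂ hyM₂ hb₂M₂ hz₂M₂ (Ne.symm hb₂y) h2'.ne'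
      hb₂z₂ (dist_adj S h1') (dist_adj S h))
  have hdz₁b₂ : (collGraph Ls).dist z₁ b₂ = 2 :=
    dist_two_of_common S hz₁b₂ hnz₁b₂ h1' hyb₂
  have hz₂b₁ : z₂ ≠ b₁ := fun h => hz₂nM₁ (h ▸ hb₁M₁)
  have hnz₂b₁ : ¬ (collGraph Ls).Adj z₂ b₁ := by
    intro h
    exact hz (eq_third_of_ones S hM₁ hyM₁ hb₁M₁ hz₁M₁ (Ne.symm hb₁y) h1'.ne'
      hb₁z₁ (dist_adj S h2') (dist_adj S h)).symm
  have hdz₂b₁ : (collGraph Ls).dist z₂ b₁ = 2 :=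
    dist_two_of_common S hz₂b₁ hnz₂b₁ h2' hyb₁
  -- the diagonal adjacencies
  have hab₂ : (collGraph Ls).Adj a₁ b₂ := by
    refine adj_of_twos S hM₂ hz₂M₂ hyM₂ hb₂M₂ h2'.ne (Ne.symm hb₂z₂) (Ne.symm hb₂y)
      hda₁z₂ ?_
    rwa [SimpleGraph.dist_comm] at hdya₁
  have hab₁ : (collGraph Ls).Adj a₂ b₁ := by
    refine adj_of_twos S hM₁ hz₁M₁ hyM₁ hb₁M₁ h1'.ne (Ne.symm hb₁z₁) (Ne.symm hb₁y)
      hda₂z₁ ?_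
    rwa [SimpleGraph.dist_comm] at hdya₂
  -- the third column line and the ninth point e
  obtain ⟨C₃, hC₃, ha₁C₃, hb₂C₃⟩ := exists_line_adj hab₂
  obtain ⟨e, heC₃, hea₁, heb₂, hC₃eq⟩ := line_third S hC₃ ha₁C₃ hb₂C₃ hab₂.ne
  have hdz₁e : (collGraph Ls).dist z₁ e = 2 :=
    one_two_two S hC₃ ha₁C₃ hb₂C₃ heC₃ hab₂.ne (Ne.symm hea₁) (Ne.symm heb₂)
      (dist_adj S hz₁a₁) hdz₁b₂
  have hdz₂e : (collGraph Ls).dist z₂ e = 2 :=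
    one_two_two S hC₃ hb₂C₃ ha₁C₃ heC₃ hab₂.ne' (Ne.symm heb₂) (Ne.symm hea₁)
      (dist_adj S hz₂b₂) (by rwa [SimpleGraph.dist_comm] at hda₁z₂)
  have hdye : (collGraph Ls).dist y e = 2 :=
    one_two_two S hC₃ hb₂C₃ ha₁C₃ heC₃ hab₂.ne' (Ne.symm heb₂) (Ne.symm hea₁)
      (dist_adj S hyb₂) hdya₁
  have hdxe : (collGraph Ls).dist x e = 2 :=
    one_two_two S hC₃ ha₁C₃ hb₂C₃ heC₃ hab₂.ne (Ne.symm hea₁) (Ne.symm heb₂)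
      (dist_adj S hxa₁) hdxb₂
  have heb₁ : (collGraph Ls).Adj e b₁ :=
    adj_of_twos S hM₁ hz₁M₁ hyM₁ hb₁M₁ h1'.ne (Ne.symm hb₁z₁) (Ne.symm hb₁y)
      (by rwa [SimpleGraph.dist_comm] at hdz₁e) (by rwa [SimpleGraph.dist_comm] at hdye)
  have hea₂ : (collGraph Ls).Adj e a₂ :=
    adj_of_twos S hL₂ hxL₂ hz₂L₂ ha₂L₂ h2.ne (Ne.symm ha₂x) (Ne.symm ha₂z₂)
      (by rwa [SimpleGraph.dist_comm] at hdxe) (by rwa [SimpleGraph.dist_comm] at hdz₂e)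
  -- the third row line
  obtain ⟨R₃, hR₃, ha₂R₃, hb₁R₃⟩ := exists_line_adj hab₁
  have heR₃ : e ∈ R₃ := triangle_line S hab₁ hea₂.symm heb₁.symm R₃ hR₃ ha₂R₃ hb₁R₃
  have hR₃eq : R₃ = {a₂, b₁, e} :=
    line_eq_of_mem S hR₃ ha₂R₃ hb₁R₃ heR₃ hab₁.ne hea₂.ne' heb₁.ne'
  -- remaining distinctness
  have ha₁a₂ : a₁ ≠ a₂ := by
    intro h
    exact hL₁L₂ (line_unique S hL₁ hL₂ ha₁x ha₁L₁ hxL₁ (by rw [h]; exact ha₂L₂) hxL₂)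
  have hb₁b₂ : b₁ ≠ b₂ := by
    intro h
    exact hM₁M₂ (line_unique S hM₁ hM₂ (Ne.symm hb₁y) hyM₁ hb₁M₁ hyM₂
      (by rw [h]; exact hb₂M₂))
  have ha₁b₁ : a₁ ≠ b₁ := by
    intro h
    exact hL₁M₁ (line_unique S hL₁ hM₁ (Ne.symm ha₁z₁) hz₁L₁ ha₁L₁ hz₁M₁
      (by rw [h]; exact hb₁M₁))
  have ha₂b₂ : a₂ ≠ b₂ := by
    intro h
    exact hL₂M₂ (line_unique S hL₂ hM₂ (Ne.symm ha₂z₂) hz₂L₂ ha₂L₂ hz₂M₂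
      (by rw [h]; exact hb₂M₂))
  have hxe : x ≠ e := ne_of_dist_two hdxe
  have hz₁e : z₁ ≠ e := ne_of_dist_two hdz₁e
  have hz₂e : z₂ ≠ e := ne_of_dist_two hdz₂e
  have hye : y ≠ e := ne_of_dist_two hdye
  -- assemble the grid
  refine ⟨![![x, z₁, a₁], ![z₂, y, b₂], ![a₂, b₁, e]], ⟨?_, ?_, ?_⟩, rfl, rfl, rfl, rfl⟩
  · intro i
    fin_cases i
    · exact ⟨L₁, hL₁, hL₁eq⟩
    · exact ⟨M₂, hM₂, line_eq_of_mem S hM₂ hz₂M₂ hyM₂ hb₂M₂ h2'.ne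
        (Ne.symm hb₂z₂) (Ne.symm hb₂y)⟩
    · exact ⟨R₃, hR₃, hR₃eq⟩
  · intro j
    fin_cases j
    · exact ⟨L₂, hL₂, hL₂eq⟩
    · exact ⟨M₁, hM₁, line_eq_of_mem S hM₁ hz₁M₁ hyM₁ hb₁M₁ h1'.ne
        (Ne.symm hb₁z₁) (Ne.symm hb₁y)⟩
    · exact ⟨C₃, hC₃, hC₃eq⟩
  · intro i j i' j' h
    have hxz₁ : x ≠ z₁ := h1.ne
    have hxz₂ : x ≠ z₂ := h2.ne
    have hz₁y : z₁ ≠ y := h1'.ne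
    have hz₂y : z₂ ≠ y := h2'.ne
    have hxa₁' : x ≠ a₁ := Ne.symm ha₁x
    have hxa₂' : x ≠ a₂ := Ne.symm ha₂x
    have hz₁a₁' : z₁ ≠ a₁ := Ne.symm ha₁z₁
    have hz₂a₂' : z₂ ≠ a₂ := Ne.symm ha₂z₂
    have hyb₁' : y ≠ b₁ := Ne.symm hb₁y
    have hyb₂' : y ≠ b₂ := Ne.symm hb₂y
    have hz₁b₁' : z₁ ≠ b₁ := Ne.symm hb₁z₁
    have hz₂b₂' : z₂ ≠ b₂ := Ne.symm hb₂z₂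
    have ha₁b₂' : a₁ ≠ b₂ := hab₂.ne
    have ha₂b₁' : a₂ ≠ b₁ := hab₁.ne
    have ha₁e : a₁ ≠ e := Ne.symm hea₁
    have hb₂e : b₂ ≠ e := Ne.symm heb₂
    have ha₂e : a₂ ≠ e := hea₂.ne'
    have hb₁e : b₁ ≠ e := heb₁.ne'
    have ha₂z₁' : z₁ ≠ a₂ := Ne.symm ha₂z₁
    have ha₁z₂' : z₂ ≠ a₁ := Ne.symm ha₁z₂
    have hz₁b₂' : b₂ ≠ z₁ := Ne.symm hz₁b₂
    have hz₂b₁' : b₁ ≠ z₂ := Ne.symm hz₂b₁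
    fin_cases i <;> fin_cases j <;> fin_cases i' <;> fin_cases j' <;>
      first
        | exact ⟨rfl, rfl⟩
        | exact absurd h (by first | assumption | (apply Ne.symm; assumption))

end NearHex
namespace NearHex

open SimpleGraph Set

variable {P : Type*} {Ls : Set (Set P)}

def range2 (p : Fin 3 → Fin 3 → P) : Set P :=
  Set.range fun ij : Fin 3 × Fin 3 => p ij.1 ij.2

def comSet (Ls : Set (Set P)) (x y : P) : Set P :=
  {z | (collGraph Ls).Adj x z ∧ (collGraph Ls).Adj z y}

def sideSet (Ls : Set (Set P)) (x y : P) : Set P :=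
  {t | ∃ z ∈ comSet Ls x y, ∃ L ∈ Ls, t ∈ L ∧ ((x ∈ L ∧ z ∈ L) ∨ (y ∈ L ∧ z ∈ L))}

def gridSet (Ls : Set (Set P)) (x y : P) : Set P :=
  sideSet Ls x y ∪
  {t | ∃ u ∈ sideSet Ls x y, ∃ v ∈ sideSet Ls x y, (collGraph Ls).Adj u v ∧
    ∃ L ∈ Ls, u ∈ L ∧ v ∈ L ∧ t ∈ L}

lemma mem_range2 (p : Fin 3 → Fin 3 → P) (i j : Fin 3) : p i j ∈ range2 p :=
  ⟨(i, j), rfl⟩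

lemma range2_perm (p : Fin 3 → Fin 3 → P) (σ τ : Equiv.Perm (Fin 3)) :
    range2 (fun i j => p (σ i) (τ j)) = range2 p := by
  ext t; constructor
  · rintro ⟨⟨i, j⟩, rfl⟩; exact ⟨(σ i, τ j), rfl⟩
  · rintro ⟨⟨i, j⟩, rfl⟩; exact ⟨(σ.symm i, τ.symm j), by simp⟩

lemma range2_ncard {p : Fin 3 → Fin 3 → P} (hG : GridData Ls p) :
    (range2 p).ncard = 9 := by
  have hinj : Function.Injective (fun ij : Fin 3 × Fin 3 => p ij.1 ij.2) := by
    rintro ⟨i, j⟩ ⟨i', j'⟩ h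
    obtain ⟨h1, h2⟩ := hG.2.2 _ _ _ _ h
    simp only [Prod.mk.injEq]
    exact ⟨h1, h2⟩
  rw [range2, ← Set.image_univ, Set.ncard_image_of_injective _ hinj, Set.ncard_univ]
  simp

lemma GridData.line_sub (S : Setup Ls) {p : Fin 3 → Fin 3 → P}
    (hG : GridData Ls p) {i j i' j' : Fin 3}
    (hadj : (collGraph Ls).Adj (p i j) (p i' j')) {L : Set P} (hL : L ∈ Ls)
    (h1 : p i j ∈ L) (h2 : p i' j' ∈ L) : L ⊆ range2 p := by
  by_cases hi : i = i'
  · subst hi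
    obtain ⟨R, hR, hReq⟩ := hG.1 i
    have hmem : ∀ k : Fin 3, p i k ∈ R := by
      intro k; rw [hReq]; fin_cases k <;> simp
    have hLR : L = R := line_unique S hL hR hadj.ne h1 h2 (hmem j) (hmem j')
    rw [hLR, hReq]
    rintro t (rfl | rfl | rfl)
    · exact mem_range2 p i 0
    · exact mem_range2 p i 1
    · exact mem_range2 p i 2
  · by_cases hj : j = j'
    · subst hj
      obtain ⟨C, hC, hCeq⟩ := hG.2.1 j
      have hmem : ∀ k : Fin 3, p k j ∈ C := by
        intro k; rw [hCeq]; fin_cases k <;> simp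
      have hLC : L = C := line_unique S hL hC hadj.ne h1 h2 (hmem i) (hmem i')
      rw [hLC, hCeq]
      rintro t (rfl | rfl | rfl)
      · exact mem_range2 p 0 j
      · exact mem_range2 p 1 j
      · exact mem_range2 p 2 j
    · exact absurd hadj (hG.not_adj_diag S hi hj)

set_option maxHeartbeats 1000000 in
/-- Regeneration: the grid is recovered, as `gridSet`, from its diagonal
pair `(p 0 0, p 1 1)` (assuming no pair of points at distance two has three
common neighbours). -/
lemma grid_regen (S : Setup Ls)
    (hmu : ∀ u v w₁ w₂ w₃ : P, (collGraph Ls).dist u v = 2 →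
      (collGraph Ls).Adj u w₁ → (collGraph Ls).Adj w₁ v →
      (collGraph Ls).Adj u w₂ → (collGraph Ls).Adj w₂ v →
      (collGraph Ls).Adj u w₃ → (collGraph Ls).Adj w₃ v →
      w₁ = w₂ ∨ w₁ = w₃ ∨ w₂ = w₃)
    {p : Fin 3 → Fin 3 → P} (hG : GridData Ls p) :
    gridSet Ls (p 0 0) (p 1 1) = range2 p := by
  have d2 : (collGraph Ls).dist (p 0 0) (p 1 1) = 2 :=
    hG.dist_diag S (by decide) (by decide)
  have haxz₁ : (collGraph Ls).Adj (p 0 0) (p 0 1) := hG.adj_row (by decide)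
  have haz₁y : (collGraph Ls).Adj (p 0 1) (p 1 1) := hG.adj_col (by decide)
  have haxz₂ : (collGraph Ls).Adj (p 0 0) (p 1 0) := hG.adj_col (by decide)
  have haz₂y : (collGraph Ls).Adj (p 1 0) (p 1 1) := hG.adj_row (by decide)
  obtain ⟨R0, hR0, hR0eq⟩ := hG.1 0
  obtain ⟨R1, hR1, hR1eq⟩ := hG.1 1
  obtain ⟨R2, hR2, hR2eq⟩ := hG.1 2
  obtain ⟨C0, hC0, hC0eq⟩ := hG.2.1 0
  obtain ⟨C1, hC1, hC1eq⟩ := hG.2.1 1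
  obtain ⟨C2, hC2, hC2eq⟩ := hG.2.1 2
  have mR0 : ∀ k : Fin 3, p 0 k ∈ R0 := by
    intro k; rw [hR0eq]; fin_cases k <;> simp
  have mR1 : ∀ k : Fin 3, p 1 k ∈ R1 := by
    intro k; rw [hR1eq]; fin_cases k <;> simp
  have mR2 : ∀ k : Fin 3, p 2 k ∈ R2 := by
    intro k; rw [hR2eq]; fin_cases k <;> simp
  have mC0 : ∀ k : Fin 3, p k 0 ∈ C0 := by
    intro k; rw [hC0eq]; fin_cases k <;> simp
  have mC1 : ∀ k : Fin 3, p k 1 ∈ C1 := by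
    intro k; rw [hC1eq]; fin_cases k <;> simp
  have mC2 : ∀ k : Fin 3, p k 2 ∈ C2 := by
    intro k; rw [hC2eq]; fin_cases k <;> simp
  -- the common neighbours are exactly the two grid ones
  have hcom : comSet Ls (p 0 0) (p 1 1) = {p 0 1, p 1 0} := by
    ext w; constructor
    · rintro ⟨hw1, hw2⟩
      rcases hmu (p 0 0) (p 1 1) w (p 0 1) (p 1 0) d2 hw1 hw2 haxz₁ haz₁y haxz₂ haz₂y
        with h | h | h
      · exact Or.inl h
      · exact Or.inr h
      · exact absurd h (hG.ne (by decide))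
    · rintro (rfl | rfl)
      · exact ⟨haxz₁, haz₁y⟩
      · exact ⟨haxz₂, haz₂y⟩
  -- the side set is the union of the four lines through the corners
  have hside : sideSet Ls (p 0 0) (p 1 1) = R0 ∪ C0 ∪ C1 ∪ R1 := by
    ext t; constructor
    · rintro ⟨z, hz, L, hL, htL, hor⟩
      rw [hcom] at hz
      rcases hz with rfl | rfl
      · rcases hor with ⟨h1, h2⟩ | ⟨h1, h2⟩
        · have : L = R0 := line_unique S hL hR0 (hG.ne (by decide)) h1 h2 (mR0 0) (mR0 1)
          exact Or.inl (Or.inl (Or.inl (this ▸ htL)))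
        · have : L = C1 := line_unique S hL hC1 (hG.ne (by decide)) h1 h2 (mC1 1) (mC1 0)
          exact Or.inl (Or.inr (this ▸ htL))
      · rcases hor with ⟨h1, h2⟩ | ⟨h1, h2⟩
        · have : L = C0 := line_unique S hL hC0 (hG.ne (by decide)) h1 h2 (mC0 0) (mC0 1)
          exact Or.inl (Or.inl (Or.inr (this ▸ htL)))
        · have : L = R1 := line_unique S hL hR1 (hG.ne (by decide)) h1 h2 (mR1 1) (mR1 0)
          exact Or.inr (this ▸ htL)
    · intro ht
      rcases ht with ((ht | ht) | ht) | ht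
      · exact ⟨p 0 1, ⟨haxz₁, haz₁y⟩, R0, hR0, ht, Or.inl ⟨mR0 0, mR0 1⟩⟩
      · exact ⟨p 1 0, ⟨haxz₂, haz₂y⟩, C0, hC0, ht, Or.inl ⟨mC0 0, mC0 1⟩⟩
      · exact ⟨p 0 1, ⟨haxz₁, haz₁y⟩, C1, hC1, ht, Or.inr ⟨mC1 1, mC1 0⟩⟩
      · exact ⟨p 1 0, ⟨haxz₂, haz₂y⟩, R1, hR1, ht, Or.inr ⟨mR1 1, mR1 0⟩⟩
  have hpos : ∀ w, w ∈ R0 ∪ C0 ∪ C1 ∪ R1 → ∃ i j, p i j = w := by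
    intro w hw
    rcases hw with ((hw | hw) | hw) | hw
    · rw [hR0eq] at hw
      rcases hw with rfl | rfl | rfl
      exacts [⟨0, 0, rfl⟩, ⟨0, 1, rfl⟩, ⟨0, 2, rfl⟩]
    · rw [hC0eq] at hw
      rcases hw with rfl | rfl | rfl
      exacts [⟨0, 0, rfl⟩, ⟨1, 0, rfl⟩, ⟨2, 0, rfl⟩]
    · rw [hC1eq] at hw
      rcases hw with rfl | rfl | rfl
      exacts [⟨0, 1, rfl⟩, ⟨1, 1, rfl⟩, ⟨2, 1, rfl⟩]
    · rw [hR1eq] at hw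
      rcases hw with rfl | rfl | rfl
      exacts [⟨1, 0, rfl⟩, ⟨1, 1, rfl⟩, ⟨1, 2, rfl⟩]
  ext t
  constructor
  · rintro (hts | ⟨u, hu, v, hv, hadj, L, hL, huL, hvL, htL⟩)
    · rw [hside] at hts
      obtain ⟨i, j, rfl⟩ := hpos t hts
      exact mem_range2 p i j
    · rw [hside] at hu hv
      obtain ⟨iu, ju, rfl⟩ := hpos u hu
      obtain ⟨iv, jv, rfl⟩ := hpos v hv
      exact hG.line_sub S hadj hL huL hvL htL
  · rintro ⟨⟨i, j⟩, rfl⟩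
    show p i j ∈ gridSet Ls (p 0 0) (p 1 1)
    have hmemside : ∀ w, w ∈ R0 ∪ C0 ∪ C1 ∪ R1 → w ∈ sideSet Ls (p 0 0) (p 1 1) := by
      intro w hw; rw [hside]; exact hw
    fin_cases i <;> fin_cases j
    · exact Or.inl (hmemside _ (Or.inl (Or.inl (Or.inl (mR0 0)))))
    · exact Or.inl (hmemside _ (Or.inl (Or.inl (Or.inl (mR0 1)))))
    · exact Or.inl (hmemside _ (Or.inl (Or.inl (Or.inl (mR0 2)))))
    · exact Or.inl (hmemside _ (Or.inl (Or.inl (Or.inr (mC0 1)))))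
    · exact Or.inl (hmemside _ (Or.inr (mR1 1)))
    · exact Or.inl (hmemside _ (Or.inr (mR1 2)))
    · exact Or.inl (hmemside _ (Or.inl (Or.inl (Or.inr (mC0 2)))))
    · exact Or.inl (hmemside _ (Or.inl (Or.inr (mC1 2))))
    · refine Or.inr ⟨p 2 0, hmemside _ (Or.inl (Or.inl (Or.inr (mC0 2)))),
        p 2 1, hmemside _ (Or.inl (Or.inr (mC1 2))), hG.adj_row (by decide),
        R2, hR2, mR2 0, mR2 1, mR2 2⟩

/-- Regeneration from an arbitrary diagonal pair. -/
lemma grid_regen_diag (S : Setup Ls)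
    (hmu : ∀ u v w₁ w₂ w₃ : P, (collGraph Ls).dist u v = 2 →
      (collGraph Ls).Adj u w₁ → (collGraph Ls).Adj w₁ v →
      (collGraph Ls).Adj u w₂ → (collGraph Ls).Adj w₂ v →
      (collGraph Ls).Adj u w₃ → (collGraph Ls).Adj w₃ v →
      w₁ = w₂ ∨ w₁ = w₃ ∨ w₂ = w₃)
    {p : Fin 3 → Fin 3 → P} (hG : GridData Ls p) {i i' j j' : Fin 3}
    (hi : i ≠ i') (hj : j ≠ j') :
    gridSet Ls (p i j) (p i' j') = range2 p := by
  obtain ⟨σ, hσ0, hσ1⟩ := exists_perm_two i i' hi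
  obtain ⟨τ, hτ0, hτ1⟩ := exists_perm_two j j' hj
  have h := grid_regen S hmu (hG.perm σ τ)
  simp only [hσ0, hσ1, hτ0, hτ1] at h
  rw [h, range2_perm]

/-- distances between grid entries. -/
lemma GridData.dist_two_iff (S : Setup Ls) {p : Fin 3 → Fin 3 → P}
    (hG : GridData Ls p) (i j i' j' : Fin 3) :
    (collGraph Ls).dist (p i j) (p i' j') = 2 ↔ (i ≠ i' ∧ j ≠ j') := by
  constructor
  · intro h
    by_cases hi : i = i'
    · subst hi
      by_cases hj : j = j'
      · subst hj; rw [dist_self] at h; omega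
      · rw [dist_adj S (hG.adj_row hj)] at h; omega
    · by_cases hj : j = j'
      · subst hj; rw [dist_adj S (hG.adj_col hi)] at h; omega
      · exact ⟨hi, hj⟩
  · rintro ⟨hi, hj⟩
    exact hG.dist_diag S hi hj

end NearHex
namespace NearHex

open SimpleGraph Set

variable {P : Type*} {Ls : Set (Set P)}

lemma line_two_others (S : Setup Ls) {L : Set P} (hL : L ∈ Ls) {z : P}
    (hz : z ∈ L) : ∃ u v, u ≠ v ∧ u ≠ z ∧ v ≠ z ∧ L = {z, u, v} := by
  obtain ⟨a, b, c, hab, hac, hbc, rfl⟩ := line_three S hL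
  simp only [Set.mem_insert_iff, Set.mem_singleton_iff] at hz
  rcases hz with rfl | rfl | rfl
  · exact ⟨b, c, hbc, fun h => hab h.symm, fun h => hac h.symm,
      by ext w; simp only [Set.mem_insert_iff, Set.mem_singleton_iff]⟩
  · exact ⟨a, c, hac, hab, fun h => hbc h.symm,
      by ext w; simp only [Set.mem_insert_iff, Set.mem_singleton_iff]; tauto⟩
  · exact ⟨a, b, hab, hac, hbc,
      by ext w; simp only [Set.mem_insert_iff, Set.mem_singleton_iff]; tauto⟩

/-- neighbours of `z` on a line through `z`, sorted by distance from `x`: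
counts of the "down" and "up" neighbours on the line. -/
lemma line_updown (S : Setup Ls) {x z : P} {d : ℕ}
    (hxz : (collGraph Ls).dist x z = d) (hd : 1 ≤ d) {L : Set P}
    (hL : L ∈ Ls) (hz : z ∈ L) :
    {w | w ∈ L ∧ w ≠ z ∧ (collGraph Ls).dist x w = d - 1}.ncard ≤ 1 ∧
    {w | w ∈ L ∧ w ≠ z ∧ (collGraph Ls).dist x w = d + 1}.ncard =
      2 - 2 * {w | w ∈ L ∧ w ≠ z ∧ (collGraph Ls).dist x w = d - 1}.ncard ∧
    {w | w ∈ L ∧ w ≠ z}.ncard = 2 ∧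
    (∀ w ∈ L, w ≠ z → (collGraph Ls).dist x w = d - 1 ∨
      (collGraph Ls).dist x w = d ∨ (collGraph Ls).dist x w = d + 1) ∧
    {w | w ∈ L ∧ w ≠ z ∧ (collGraph Ls).dist x w = d}.ncard =
      {w | w ∈ L ∧ w ≠ z ∧ (collGraph Ls).dist x w = d - 1}.ncard := by
  obtain ⟨u, v, huv, huz, hvz, hLeq⟩ := line_two_others S hL hz
  obtain ⟨m, hmL, hpat⟩ := pattern S x hL
  have hmem : ∀ w, w ∈ L ↔ (w = z ∨ w = u ∨ w = v) := by
    intro w; rw [hLeq]; simp only [Set.mem_insert_iff, Set.mem_singleton_iff]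
  have hzL' : z ∈ L := hz
  have huL : u ∈ L := by rw [hLeq]; simp
  have hvL : v ∈ L := by rw [hLeq]; simp
  have hset2 : {w | w ∈ L ∧ w ≠ z} = {u, v} := by
    ext w
    simp only [Set.mem_setOf_eq, Set.mem_insert_iff, Set.mem_singleton_iff, hmem w]
    constructor
    · rintro ⟨(rfl | rfl | rfl), hne⟩
      · exact absurd rfl hne
      · exact Or.inl rfl
      · exact Or.inr rfl
    · rintro (rfl | rfl)
      · exact ⟨Or.inr (Or.inl rfl), huz⟩
      · exact ⟨Or.inr (Or.inr rfl), hvz⟩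
  have hcard2 : ({u, v} : Set P).ncard = 2 := by
    rw [Set.ncard_insert_of_notMem (by simpa using huv), Set.ncard_singleton]
  have hm3 : m = z ∨ m = u ∨ m = v := (hmem m).mp hmL
  -- helper to compute the three ncards in each case
  have main : ((collGraph Ls).dist x u = d + 1 ∧ (collGraph Ls).dist x v = d + 1) ∨
      ((collGraph Ls).dist x u = d - 1 ∧ (collGraph Ls).dist x v = d) ∨
      ((collGraph Ls).dist x u = d ∧ (collGraph Ls).dist x v = d - 1) := by
    rcases hm3 with rfl | rfl | rfl
    · have h1 := hpat u huL huz
      have h2 := hpat v hvL hvz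
      left; omega
    · have h1 := hpat z hzL' (Ne.symm huz)
      have h2 := hpat v hvL (Ne.symm huv)
      right; left; omega
    · have h1 := hpat z hzL' (Ne.symm hvz)
      have h2 := hpat u huL huv
      right; right; omega
  have hDsub : ∀ k : ℕ, {w | w ∈ L ∧ w ≠ z ∧ (collGraph Ls).dist x w = k} =
      {w | w ∈ ({u, v} : Set P) ∧ (collGraph Ls).dist x w = k} := by
    intro k; ext w
    simp only [Set.mem_setOf_eq, ← hset2, Set.mem_setOf_eq]
    tauto
  have hcomp : ∀ k : ℕ, {w | w ∈ ({u, v} : Set P) ∧ (collGraph Ls).dist x w = k}.ncard =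
      (if (collGraph Ls).dist x u = k then 1 else 0) +
      (if (collGraph Ls).dist x v = k then 1 else 0) := by
    intro k
    by_cases h1 : (collGraph Ls).dist x u = k <;>
      by_cases h2 : (collGraph Ls).dist x v = k
    · have : {w | w ∈ ({u, v} : Set P) ∧ (collGraph Ls).dist x w = k} = {u, v} := by
        ext w
        simp only [Set.mem_setOf_eq, Set.mem_insert_iff, Set.mem_singleton_iff]
        constructor
        · rintro ⟨h, _⟩; exact h
        · rintro (rfl | rfl) <;> simp [h1, h2]
      rw [this, hcard2]; simp [h1, h2]
    · have : {w | w ∈ ({u, v} : Set P) ∧ (collGraph Ls).dist x w = k} = {u} := by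
        ext w
        simp only [Set.mem_setOf_eq, Set.mem_insert_iff, Set.mem_singleton_iff]
        constructor
        · rintro ⟨rfl | rfl, hw⟩
          · rfl
          · exact absurd hw h2
        · rintro rfl; exact ⟨Or.inl rfl, h1⟩
      rw [this, Set.ncard_singleton]; simp [h1, h2]
    · have : {w | w ∈ ({u, v} : Set P) ∧ (collGraph Ls).dist x w = k} = {v} := by
        ext w
        simp only [Set.mem_setOf_eq, Set.mem_insert_iff, Set.mem_singleton_iff]
        constructor
        · rintro ⟨rfl | rfl, hw⟩
          · exact absurd hw h1
          · rfl
        · rintro rfl; exact ⟨Or.inr rfl, h2⟩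
      rw [this, Set.ncard_singleton]; simp [h1, h2]
    · have : {w | w ∈ ({u, v} : Set P) ∧ (collGraph Ls).dist x w = k} = ∅ := by
        ext w
        simp only [Set.mem_setOf_eq, Set.mem_insert_iff, Set.mem_singleton_iff,
          Set.mem_empty_iff_false, iff_false]
        rintro ⟨rfl | rfl, hw⟩
        · exact h1 hw
        · exact h2 hw
      rw [this, Set.ncard_empty]; simp [h1, h2]
  refine ⟨?_, ?_, by rw [hset2, hcard2], ?_, ?_⟩
  · rw [hDsub, hcomp]
    rcases main with ⟨h1, h2⟩ | ⟨h1, h2⟩ | ⟨h1, h2⟩ <;> rw [h1, h2] <;>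
      split_ifs <;> omega
  · rw [hDsub, hDsub, hcomp, hcomp]
    rcases main with ⟨h1, h2⟩ | ⟨h1, h2⟩ | ⟨h1, h2⟩ <;> rw [h1, h2] <;>
      split_ifs <;> omega
  · intro w hwL hwz
    have hw : w = z ∨ w = u ∨ w = v := (hmem w).mp hwL
    rcases hw with rfl | rfl | rfl
    · exact absurd rfl hwz
    · rcases main with ⟨h1, _⟩ | ⟨h1, _⟩ | ⟨h1, _⟩ <;> omega
    · rcases main with ⟨_, h2⟩ | ⟨_, h2⟩ | ⟨_, h2⟩ <;> omega
  · rw [hDsub, hDsub, hcomp, hcomp]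
    rcases main with ⟨h1, h2⟩ | ⟨h1, h2⟩ | ⟨h1, h2⟩ <;> rw [h1, h2] <;>
      split_ifs <;> omega

end NearHex
namespace NearHex

open SimpleGraph Set

variable {P : Type*} {Ls : Set (Set P)}

lemma point_profile (S : Setup Ls) {x z : P} {d : ℕ}
    (hxz : (collGraph Ls).dist x z = d) (hd : 1 ≤ d) :
    {w | (collGraph Ls).Adj z w ∧ (collGraph Ls).dist x w = d - 1}.ncard ≤ 3 ∧
    {w | (collGraph Ls).Adj z w ∧ (collGraph Ls).dist x w = d + 1}.ncard =
      6 - 2 * {w | (collGraph Ls).Adj z w ∧ (collGraph Ls).dist x w = d - 1}.ncard ∧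
    {w | (collGraph Ls).Adj z w}.ncard = 6 := by
  obtain ⟨L₁, L₂, L₃, hL₁, hL₂, hL₃, hz₁, hz₂, hz₃, h12, h13, h23, hall⟩ := thru_lines S z
  have hdec : ∀ Q : P → Prop, {w | (collGraph Ls).Adj z w ∧ Q w} =
      {w | w ∈ L₁ ∧ w ≠ z ∧ Q w} ∪ {w | w ∈ L₂ ∧ w ≠ z ∧ Q w} ∪
      {w | w ∈ L₃ ∧ w ≠ z ∧ Q w} := by
    intro Q; ext w
    simp only [Set.mem_setOf_eq, Set.mem_union]
    constructor
    · rintro ⟨hadj, hQ⟩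
      obtain ⟨M, hM, hzM, hwM⟩ := exists_line_adj hadj
      rcases hall M hM hzM with rfl | rfl | rfl
      · exact Or.inl (Or.inl ⟨hwM, hadj.ne', hQ⟩)
      · exact Or.inl (Or.inr ⟨hwM, hadj.ne', hQ⟩)
      · exact Or.inr ⟨hwM, hadj.ne', hQ⟩
    · rintro ((⟨hw, hne, hQ⟩ | ⟨hw, hne, hQ⟩) | ⟨hw, hne, hQ⟩)
      · exact ⟨adj_of_mem hL₁ hz₁ hw (Ne.symm hne), hQ⟩
      · exact ⟨adj_of_mem hL₂ hz₂ hw (Ne.symm hne), hQ⟩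
      · exact ⟨adj_of_mem hL₃ hz₃ hw (Ne.symm hne), hQ⟩
  have hdisj : ∀ (Q : P → Prop) (L L' : Set P), L ∈ Ls → L' ∈ Ls → L ≠ L' →
      z ∈ L → z ∈ L' →
      Disjoint {w | w ∈ L ∧ w ≠ z ∧ Q w} {w | w ∈ L' ∧ w ≠ z ∧ Q w} := by
    intro Q L L' hL hL' hne hzL hzL'
    rw [Set.disjoint_left]
    rintro w ⟨hw1, hwz, _⟩ ⟨hw2, _, _⟩
    exact hne (line_unique S hL hL' (Ne.symm hwz) hzL hw1 hzL' hw2)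
  have hfin : ∀ (Q : P → Prop) (L : Set P), L ∈ Ls →
      {w | w ∈ L ∧ w ≠ z ∧ Q w}.Finite := by
    intro Q L hL
    exact Set.Finite.subset (line_finite S hL) (fun w hw => hw.1)
  have hsum : ∀ Q : P → Prop, {w | (collGraph Ls).Adj z w ∧ Q w}.ncard =
      {w | w ∈ L₁ ∧ w ≠ z ∧ Q w}.ncard + {w | w ∈ L₂ ∧ w ≠ z ∧ Q w}.ncard +
      {w | w ∈ L₃ ∧ w ≠ z ∧ Q w}.ncard := by
    intro Q
    have dAB := hdisj Q L₁ L₂ hL₁ hL₂ h12 hz₁ hz₂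
    have dAC := hdisj Q L₁ L₃ hL₁ hL₃ h13 hz₁ hz₃
    have dBC := hdisj Q L₂ L₃ hL₂ hL₃ h23 hz₂ hz₃
    have dABC : Disjoint ({w | w ∈ L₁ ∧ w ≠ z ∧ Q w} ∪ {w | w ∈ L₂ ∧ w ≠ z ∧ Q w})
        {w | w ∈ L₃ ∧ w ≠ z ∧ Q w} := by
      rw [Set.disjoint_union_left]; exact ⟨dAC, dBC⟩
    rw [hdec Q,
      Set.ncard_union_eq dABC ((hfin Q L₁ hL₁).union (hfin Q L₂ hL₂)) (hfin Q L₃ hL₃),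
      Set.ncard_union_eq dAB (hfin Q L₁ hL₁) (hfin Q L₂ hL₂)]
  obtain ⟨d₁le, u₁eq, t₁, _, _⟩ := line_updown S hxz hd hL₁ hz₁
  obtain ⟨d₂le, u₂eq, t₂, _, _⟩ := line_updown S hxz hd hL₂ hz₂
  obtain ⟨d₃le, u₃eq, t₃, _, _⟩ := line_updown S hxz hd hL₃ hz₃
  have e₁ := hsum (fun w => (collGraph Ls).dist x w = d - 1)
  have e₂ := hsum (fun w => (collGraph Ls).dist x w = d + 1)
  have e₃ : {w | (collGraph Ls).Adj z w}.ncard =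
      {w | w ∈ L₁ ∧ w ≠ z}.ncard + {w | w ∈ L₂ ∧ w ≠ z}.ncard +
      {w | w ∈ L₃ ∧ w ≠ z}.ncard := by
    have := hsum (fun _ => True)
    simpa using this
  refine ⟨?_, ?_, ?_⟩
  · rw [e₁]; omega
  · rw [e₁, e₂]; omega
  · rw [e₃, t₁, t₂, t₃]

lemma deg_six (S : Setup Ls) (z : P) : {w | (collGraph Ls).Adj z w}.ncard = 6 := by
  obtain ⟨w, hw⟩ : ∃ w, (collGraph Ls).Adj z w := by
    obtain ⟨L₁, _, _, hL₁, _, _, hz₁, _⟩ := thru_lines S z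
    obtain ⟨u, v, huv, huz, hvz, hLeq⟩ := line_two_others S hL₁ hz₁
    exact ⟨u, adj_of_mem hL₁ hz₁ (by rw [hLeq]; simp) (Ne.symm huz)⟩
  exact (point_profile S (dist_adj S hw.symm : (collGraph Ls).dist w z = 1) le_rfl).2.2

lemma down_one (S : Setup Ls) {x z : P} (h : (collGraph Ls).dist x z = 1) :
    {w | (collGraph Ls).Adj z w ∧ (collGraph Ls).dist x w = 0}.ncard = 1 := by
  have : {w | (collGraph Ls).Adj z w ∧ (collGraph Ls).dist x w = 0} = {x} := by
    ext w
    simp only [Set.mem_setOf_eq, Set.mem_singleton_iff]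
    constructor
    · rintro ⟨hadj, hw⟩; exact (eq_of_dist_zero S hw).symm
    · rintro rfl
      exact ⟨(adj_of_dist_one h).symm, dist_self⟩
  rw [this, Set.ncard_singleton]

/-- a neighbour of `x` has exactly `4` neighbours at distance `2` from `x`. -/
lemma profile_one (S : Setup Ls) {x z : P} (h : (collGraph Ls).dist x z = 1) :
    {w | (collGraph Ls).Adj z w ∧ (collGraph Ls).dist x w = 2}.ncard = 4 := by
  have hp := (point_profile S h le_rfl).2.1
  rw [down_one S h] at hp
  simpa using hp

/-- profile of a point at distance 2: `μ` common neighbours, etc. -/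
lemma profile_two (S : Setup Ls) {x y : P} (h : (collGraph Ls).dist x y = 2) :
    1 ≤ (comSet Ls x y).ncard ∧ (comSet Ls x y).ncard ≤ 3 ∧
    {w | (collGraph Ls).Adj y w ∧ (collGraph Ls).dist x w = 3}.ncard =
      6 - 2 * (comSet Ls x y).ncard := by
  have hcom : comSet Ls x y =
      {w | (collGraph Ls).Adj y w ∧ (collGraph Ls).dist x w = 2 - 1} := by
    ext w
    simp only [comSet, Set.mem_setOf_eq]
    constructor
    · rintro ⟨h1, h2⟩; exact ⟨h2.symm, dist_adj S h1⟩
    · rintro ⟨h1, h2⟩; exact ⟨adj_of_dist_one h2, h1.symm⟩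
  obtain ⟨hle, hup, _⟩ := point_profile S h (by omega)
  refine ⟨?_, by rw [hcom]; exact hle, by rw [hcom]; exact hup⟩
  obtain ⟨w, hw1, hw2⟩ := common_of_dist_two S h
  have : w ∈ comSet Ls x y := ⟨hw1, hw2⟩
  have hfin : (comSet Ls x y).Finite := by
    rw [hcom]
    exact Set.Finite.subset (nbrs_finite S y) (fun w hw => hw.1)
  exact (Set.ncard_pos hfin).mpr ⟨w, this⟩

/-- a point at distance 3 from `x` has exactly 3 neighbours at distance 2. -/
lemma profile_three (S : Setup Ls) {x v : P} (h : (collGraph Ls).dist x v = 3) :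
    {w | (collGraph Ls).Adj v w ∧ (collGraph Ls).dist x w = 2}.ncard = 3 := by
  obtain ⟨hle, hup, _⟩ := point_profile S h (by omega)
  have hzero : {w | (collGraph Ls).Adj v w ∧ (collGraph Ls).dist x w = 3 + 1} = ∅ := by
    ext w
    simp only [Set.mem_setOf_eq, Set.mem_empty_iff_false, iff_false]
    rintro ⟨_, hw⟩
    have := S.diam x w; omega
  rw [hzero, Set.ncard_empty] at hup
  have h32 : (3 : ℕ) - 1 = 2 := rfl
  rw [h32] at hle hup
  omega

end NearHex
namespace NearHex

open SimpleGraph Set Finset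

open scoped Classical

variable {P : Type*} {Ls : Set (Set P)}

noncomputable def sphF (Ls : Set (Set P)) [Fintype P] (x : P) (k : ℕ) : Finset P :=
  Finset.univ.filter (fun y => (collGraph Ls).dist x y = k)

lemma mem_sphF [Fintype P] {x y : P} {k : ℕ} :
    y ∈ sphF Ls x k ↔ (collGraph Ls).dist x y = k := by
  simp [sphF]

lemma card_sph_one [Fintype P] (S : Setup Ls) (x : P) : (sphF Ls x 1).card = 6 := by
  have hset : {w | (collGraph Ls).Adj x w} = ↑(sphF Ls x 1) := by
    ext w
    simp only [Set.mem_setOf_eq, Finset.coe_filter, sphF, Finset.mem_univ, true_and,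
      Set.mem_setOf_eq]
    exact ⟨fun h => dist_adj S h, fun h => adj_of_dist_one h⟩
  have := deg_six S x
  rwa [hset, Set.ncard_coe_finset] at this

lemma sum_mu [Fintype P] (S : Setup Ls) (x : P) :
    ∑ y ∈ sphF Ls x 2, (comSet Ls x y).ncard = 24 := by
  have hconv : ∀ y ∈ sphF Ls x 2, (comSet Ls x y).ncard =
      ((sphF Ls x 1).filter (fun z => (collGraph Ls).Adj y z)).card := by
    intro y hy
    rw [← Set.ncard_coe_finset]
    congr 1
    ext z
    simp only [comSet, Set.mem_setOf_eq, Finset.coe_filter, Finset.mem_filter,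
      mem_sphF, sphF, Finset.mem_univ, true_and]
    constructor
    · rintro ⟨h1, h2⟩; exact ⟨dist_adj S h1, h2.symm⟩
    · rintro ⟨h1, h2⟩; exact ⟨adj_of_dist_one h1, h2.symm⟩
  rw [Finset.sum_congr rfl hconv]
  have hswap : ∑ y ∈ sphF Ls x 2, ((sphF Ls x 1).filter
        (fun z => (collGraph Ls).Adj y z)).card =
      ∑ z ∈ sphF Ls x 1, ((sphF Ls x 2).filter
        (fun y => (collGraph Ls).Adj z y)).card := by
    simp only [Finset.card_filter]
    rw [Finset.sum_comm]
    congr 1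
    ext z
    congr 1
    ext y
    by_cases h : (collGraph Ls).Adj y z
    · rw [if_pos h, if_pos h.symm]
    · rw [if_neg h, if_neg (fun hh => h hh.symm)]
  rw [hswap]
  have h4 : ∀ z ∈ sphF Ls x 1, ((sphF Ls x 2).filter
      (fun y => (collGraph Ls).Adj z y)).card = 4 := by
    intro z hz
    rw [mem_sphF] at hz
    have hp := profile_one S hz
    have hset : {w | (collGraph Ls).Adj z w ∧ (collGraph Ls).dist x w = 2} =
        ↑((sphF Ls x 2).filter (fun y => (collGraph Ls).Adj z y)) := by
      ext w
      simp only [Set.mem_setOf_eq, Finset.coe_filter, Finset.mem_filter, sphF,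
        Finset.mem_univ, true_and, Set.mem_setOf_eq]
      tauto
    rwa [hset, Set.ncard_coe_finset] at hp
  rw [Finset.sum_congr rfl h4, Finset.sum_const, card_sph_one S x]
  simp

lemma updown_count [Fintype P] (S : Setup Ls) (x : P) :
    3 * (sphF Ls x 3).card + 48 = 6 * (sphF Ls x 2).card := by
  -- edges between sphere 2 and sphere 3, counted from both sides
  have hswap : ∑ y ∈ sphF Ls x 2, ((sphF Ls x 3).filter
        (fun v => (collGraph Ls).Adj y v)).card =
      ∑ v ∈ sphF Ls x 3, ((sphF Ls x 2).filter
        (fun y => (collGraph Ls).Adj v y)).card := by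
    simp only [Finset.card_filter]
    rw [Finset.sum_comm]
    congr 1
    ext v
    congr 1
    ext y
    by_cases h : (collGraph Ls).Adj y v
    · rw [if_pos h, if_pos h.symm]
    · rw [if_neg h, if_neg (fun hh => h hh.symm)]
  have hup : ∀ y ∈ sphF Ls x 2, ((sphF Ls x 3).filter
      (fun v => (collGraph Ls).Adj y v)).card + 2 * (comSet Ls x y).ncard = 6 := by
    intro y hy
    rw [mem_sphF] at hy
    obtain ⟨h1, h3, hupeq⟩ := profile_two S hy
    have hset : {w | (collGraph Ls).Adj y w ∧ (collGraph Ls).dist x w = 3} =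
        ↑((sphF Ls x 3).filter (fun v => (collGraph Ls).Adj y v)) := by
      ext w
      simp only [Set.mem_setOf_eq, Finset.coe_filter, Finset.mem_filter, sphF,
        Finset.mem_univ, true_and, Set.mem_setOf_eq]
      tauto
    rw [hset, Set.ncard_coe_finset] at hupeq
    omega
  have hdown : ∀ v ∈ sphF Ls x 3, ((sphF Ls x 2).filter
      (fun y => (collGraph Ls).Adj v y)).card = 3 := by
    intro v hv
    rw [mem_sphF] at hv
    have hp := profile_three S hv
    have hset : {w | (collGraph Ls).Adj v w ∧ (collGraph Ls).dist x w = 2} =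
        ↑((sphF Ls x 2).filter (fun y => (collGraph Ls).Adj v y)) := by
      ext w
      simp only [Set.mem_setOf_eq, Finset.coe_filter, Finset.mem_filter, sphF,
        Finset.mem_univ, true_and, Set.mem_setOf_eq]
      tauto
    rwa [hset, Set.ncard_coe_finset] at hp
  have e1 : ∑ y ∈ sphF Ls x 2, (((sphF Ls x 3).filter
        (fun v => (collGraph Ls).Adj y v)).card + 2 * (comSet Ls x y).ncard) =
      6 * (sphF Ls x 2).card := by
    rw [Finset.sum_congr rfl hup, Finset.sum_const, smul_eq_mul, mul_comm]
  rw [Finset.sum_add_distrib, ← Finset.mul_sum, sum_mu S x, hswap,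
    Finset.sum_congr rfl hdown, Finset.sum_const, smul_eq_mul, mul_comm] at e1
  omega

lemma card_partition [Fintype P] (S : Setup Ls) (x : P) :
    Fintype.card P = 7 + (sphF Ls x 2).card + (sphF Ls x 3).card := by
  have hfib : (Finset.univ : Finset P).card =
      ∑ k ∈ Finset.range 4, (Finset.univ.filter
        (fun y => (collGraph Ls).dist x y = k)).card := by
    refine Finset.card_eq_sum_card_fiberwise ?_
    intro y _
    rw [Finset.mem_coe, Finset.mem_range]
    have := S.diam x y; omega
  have h0 : (Finset.univ.filter (fun y => (collGraph Ls).dist x y = 0)).card = 1 := by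
    have : Finset.univ.filter (fun y => (collGraph Ls).dist x y = 0) = {x} := by
      ext y
      simp only [Finset.mem_filter, Finset.mem_univ, true_and, Finset.mem_singleton]
      constructor
      · intro h; exact (eq_of_dist_zero S h).symm
      · rintro rfl; exact dist_self
    rw [this, Finset.card_singleton]
  rw [Finset.sum_range_succ, Finset.sum_range_succ, Finset.sum_range_succ,
    Finset.sum_range_one] at hfib
  have h1 : (Finset.univ.filter (fun y => (collGraph Ls).dist x y = 1)).card = 6 :=
    card_sph_one S x
  rw [Finset.card_univ] at hfib
  rw [hfib, h0, h1]
  simp only [sphF]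
  try omega

/-- the number of points at distance 2 is the same from every point. -/
lemma n2_const [Fintype P] (S : Setup Ls) (x : P) :
    9 * (sphF Ls x 2).card = 3 * Fintype.card P + 27 := by
  have h1 := updown_count S x
  have h2 := card_partition S x
  omega

end NearHex
namespace NearHex

open SimpleGraph Set

variable {P : Type*} {Ls : Set (Set P)}

lemma GridData.row_line {p : Fin 3 → Fin 3 → P} (hG : GridData Ls p) (i : Fin 3) :
    ∃ L ∈ Ls, (∀ j, p i j ∈ L) ∧ L = {p i 0, p i 1, p i 2} := by
  obtain ⟨L, hL, hLeq⟩ := hG.1 i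
  exact ⟨L, hL, fun j => by rw [hLeq]; fin_cases j <;> simp, hLeq⟩

lemma GridData.col_line {p : Fin 3 → Fin 3 → P} (hG : GridData Ls p) (j : Fin 3) :
    ∃ L ∈ Ls, (∀ i, p i j ∈ L) ∧ L = {p 0 j, p 1 j, p 2 j} := by
  obtain ⟨L, hL, hLeq⟩ := hG.2.1 j
  exact ⟨L, hL, fun i => by rw [hLeq]; fin_cases i <;> simp, hLeq⟩

/-- the third point on the line through two given points is unique. -/
lemma third_eq (S : Setup Ls) {L L' : Set P} (hL : L ∈ Ls) (hL' : L' ∈ Ls)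
    {u v t t' : P} (huv : u ≠ v) (huL : u ∈ L) (hvL : v ∈ L) (huL' : u ∈ L')
    (hvL' : v ∈ L') (htL : t ∈ L) (ht'L' : t' ∈ L') (htu : t ≠ u) (htv : t ≠ v)
    (ht'u : t' ≠ u) (ht'v : t' ≠ v) : t = t' := by
  have hLL' : L = L' := line_unique S hL hL' huv huL hvL huL' hvL'
  have hLeq : L = {u, v, t} := line_eq_of_mem S hL huL hvL htL huv
    (Ne.symm htu) (Ne.symm htv)
  rw [← hLL', hLeq] at ht'L'
  rcases ht'L' with h | h | h
  · exact absurd h ht'u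
  · exact absurd h ht'v
  · exact h.symm

/-- a further common neighbour of the two corners of a grid is adjacent to the
opposite corner `p 2 2`. -/
lemma GridData.extra_adj (S : Setup Ls) {p : Fin 3 → Fin 3 → P}
    (hG : GridData Ls p) {z : P}
    (hz1 : (collGraph Ls).Adj (p 0 0) z) (hz2 : (collGraph Ls).Adj z (p 1 1))
    (hne1 : z ≠ p 0 1) (hne2 : z ≠ p 1 0) :
    (collGraph Ls).Adj z (p 2 2) := by
  have d2 : (collGraph Ls).dist (p 0 0) (p 1 1) = 2 :=
    hG.dist_diag S (by decide) (by decide)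
  have hna : ¬ (collGraph Ls).Adj z (p 0 1) := by
    intro h
    exact common_nonadj S d2 hz1 hz2 (hG.adj_row (by decide))
      (hG.adj_col (by decide)) hne1 h
  have hdz01 : (collGraph Ls).dist z (p 0 1) = 2 :=
    dist_two_of_common S hne1 hna hz1.symm (hG.adj_row (by decide))
  have hnb : ¬ (collGraph Ls).Adj z (p 1 0) := by
    intro h
    exact common_nonadj S d2 hz1 hz2 (hG.adj_col (by decide))
      (hG.adj_row (by decide)) hne2 h
  have hdz10 : (collGraph Ls).dist z (p 1 0) = 2 :=
    dist_two_of_common S hne2 hnb hz1.symm (hG.adj_col (by decide))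
  obtain ⟨R0, hR0, mR0, _⟩ := hG.row_line 0
  obtain ⟨R2, hR2, mR2, _⟩ := hG.row_line 2
  obtain ⟨C0, hC0, mC0, _⟩ := hG.col_line 0
  obtain ⟨C1, hC1, mC1, _⟩ := hG.col_line 1
  have hdz02 : (collGraph Ls).dist z (p 0 2) = 2 :=
    one_two_two S hR0 (mR0 0) (mR0 1) (mR0 2) (hG.ne (by decide)) (hG.ne (by decide))
      (hG.ne (by decide)) (dist_adj S hz1.symm) hdz01
  have hdz20 : (collGraph Ls).dist z (p 2 0) = 2 :=
    one_two_two S hC0 (mC0 0) (mC0 1) (mC0 2) (hG.ne (by decide)) (hG.ne (by decide))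
      (hG.ne (by decide)) (dist_adj S hz1.symm) hdz10
  have hdz21 : (collGraph Ls).dist z (p 2 1) = 2 :=
    one_two_two S hC1 (mC1 1) (mC1 0) (mC1 2) (hG.ne (by decide)) (hG.ne (by decide))
      (hG.ne (by decide)) (dist_adj S hz2) hdz01
  exact adj_of_twos S hR2 (mR2 0) (mR2 1) (mR2 2) (hG.ne (by decide))
    (hG.ne (by decide)) (hG.ne (by decide)) hdz20 hdz21

end NearHex
namespace NearHex

open SimpleGraph Set

variable {P : Type*} {Ls : Set (Set P)}

def threeCommons (Ls : Set (Set P)) (x u : P) : Prop :=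
  ∃ w₁ w₂ w₃ : P, w₁ ≠ w₂ ∧ w₁ ≠ w₃ ∧ w₂ ≠ w₃ ∧
    ((collGraph Ls).Adj x w₁ ∧ (collGraph Ls).Adj w₁ u) ∧
    ((collGraph Ls).Adj x w₂ ∧ (collGraph Ls).Adj w₂ u) ∧
    ((collGraph Ls).Adj x w₃ ∧ (collGraph Ls).Adj w₃ u)

set_option maxHeartbeats 2000000 in
lemma eight_partners (S : Setup Ls) {x y z₁ z₂ z₃ : P}
    (hxy : (collGraph Ls).dist x y = 2)
    (h1 : (collGraph Ls).Adj x z₁) (h1' : (collGraph Ls).Adj z₁ y)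
    (h2 : (collGraph Ls).Adj x z₂) (h2' : (collGraph Ls).Adj z₂ y)
    (h3 : (collGraph Ls).Adj x z₃) (h3' : (collGraph Ls).Adj z₃ y)
    (h12 : z₁ ≠ z₂) (h13 : z₁ ≠ z₃) (h23 : z₂ ≠ z₃) :
    ∃ l : List P, l.length = 8 ∧ l.Nodup ∧
      ∀ u ∈ l, (collGraph Ls).dist x u = 2 ∧ threeCommons Ls x u := by
  obtain ⟨q, hq, hq00, hq11, hq01, hq10⟩ := grid_of_two_common S hxy h1 h1' h2 h2' h12
  obtain ⟨r, hr, hr00, hr11, hr01, hr10⟩ := grid_of_two_common S hxy h1 h1' h3 h3' h13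
  obtain ⟨s, hs, hs00, hs11, hs01, hs10⟩ := grid_of_two_common S hxy h2 h2' h3 h3' h23
  -- named points
  set a₁ := q 0 2 with ha₁def
  set a₂ := q 2 0 with ha₂def
  set b₁ := q 2 1 with hb₁def
  set b₂ := q 1 2 with hb₂def
  set e₁₂ := q 2 2 with he₁₂def
  set a₃ := r 2 0 with ha₃def
  set b₃ := r 1 2 with hb₃def
  set e₁₃ := r 2 2 with he₁₃def
  set e₂₃ := s 2 2 with he₂₃def
  -- lines of the grids
  obtain ⟨Rq0, hRq0, mRq0, eRq0⟩ := hq.row_line 0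
  obtain ⟨Rq1, hRq1, mRq1, eRq1⟩ := hq.row_line 1
  obtain ⟨Rq2, hRq2, mRq2, eRq2⟩ := hq.row_line 2
  obtain ⟨Cq0, hCq0, mCq0, eCq0⟩ := hq.col_line 0
  obtain ⟨Cq1, hCq1, mCq1, eCq1⟩ := hq.col_line 1
  obtain ⟨Rr0, hRr0, mRr0, eRr0⟩ := hr.row_line 0
  obtain ⟨Rr1, hRr1, mRr1, eRr1⟩ := hr.row_line 1
  obtain ⟨Cr0, hCr0, mCr0, eCr0⟩ := hr.col_line 0
  obtain ⟨Cr1, hCr1, mCr1, eCr1⟩ := hr.col_line 1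
  obtain ⟨Rs0, hRs0, mRs0, eRs0⟩ := hs.row_line 0
  obtain ⟨Rs1, hRs1, mRs1, eRs1⟩ := hs.row_line 1
  obtain ⟨Cs0, hCs0, mCs0, eCs0⟩ := hs.col_line 0
  obtain ⟨Cs1, hCs1, mCs1, eCs1⟩ := hs.col_line 1
  -- corner memberships, rewritten
  have mxq : x ∈ Rq0 := hq00 ▸ mRq0 0
  have mz₁q : z₁ ∈ Rq0 := hq01 ▸ mRq0 1
  have mxr : x ∈ Rr0 := hr00 ▸ mRr0 0
  have mz₁r : z₁ ∈ Rr0 := hr01 ▸ mRr0 1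
  have mxq' : x ∈ Cq0 := hq00 ▸ mCq0 0
  have mz₂q : z₂ ∈ Cq0 := hq10 ▸ mCq0 1
  have mxs : x ∈ Rs0 := hs00 ▸ mRs0 0
  have mz₂s : z₂ ∈ Rs0 := hs01 ▸ mRs0 1
  have mxr' : x ∈ Cr0 := hr00 ▸ mCr0 0
  have mz₃r : z₃ ∈ Cr0 := hr10 ▸ mCr0 1
  have mxs' : x ∈ Cs0 := hs00 ▸ mCs0 0
  have mz₃s : z₃ ∈ Cs0 := hs10 ▸ mCs0 1
  have myq : y ∈ Cq1 := hq11 ▸ mCq1 1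
  have mz₁q' : z₁ ∈ Cq1 := hq01 ▸ mCq1 0
  have myr : y ∈ Cr1 := hr11 ▸ mCr1 1
  have mz₁r' : z₁ ∈ Cr1 := hr01 ▸ mCr1 0
  have myq' : y ∈ Rq1 := hq11 ▸ mRq1 1
  have mz₂q' : z₂ ∈ Rq1 := hq10 ▸ mRq1 0
  have mys : y ∈ Cs1 := hs11 ▸ mCs1 1
  have mz₂s' : z₂ ∈ Cs1 := hs01 ▸ mCs1 0
  have myr' : y ∈ Rr1 := hr11 ▸ mRr1 1
  have mz₃r' : z₃ ∈ Rr1 := hr10 ▸ mRr1 0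
  have mys' : y ∈ Rs1 := hs11 ▸ mRs1 1
  have mz₃s' : z₃ ∈ Rs1 := hs10 ▸ mRs1 0
  -- basic distinctness of third points from corners
  have ha₁x : a₁ ≠ x := hq00 ▸ hq.ne (by decide)
  have ha₁z₁ : a₁ ≠ z₁ := hq01 ▸ hq.ne (by decide)
  have ha₂x : a₂ ≠ x := hq00 ▸ hq.ne (by decide)
  have ha₂z₂ : a₂ ≠ z₂ := hq10 ▸ hq.ne (by decide)
  have ha₃x : a₃ ≠ x := hr00 ▸ hr.ne (by decide)
  have ha₃z₃ : a₃ ≠ z₃ := hr10 ▸ hr.ne (by decide)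
  have hb₁y : b₁ ≠ y := hq11 ▸ hq.ne (by decide)
  have hb₁z₁ : b₁ ≠ z₁ := hq01 ▸ hq.ne (by decide)
  have hb₂y : b₂ ≠ y := hq11 ▸ hq.ne (by decide)
  have hb₂z₂ : b₂ ≠ z₂ := hq10 ▸ hq.ne (by decide)
  have hb₃y : b₃ ≠ y := hr11 ▸ hr.ne (by decide)
  have hb₃z₃ : b₃ ≠ z₃ := hr10 ▸ hr.ne (by decide)
  have hr02x : r 0 2 ≠ x := hr00 ▸ hr.ne (by decide)
  have hr02z₁ : r 0 2 ≠ z₁ := hr01 ▸ hr.ne (by decide)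
  have hr21y : r 2 1 ≠ y := hr11 ▸ hr.ne (by decide)
  have hr21z₁ : r 2 1 ≠ z₁ := hr01 ▸ hr.ne (by decide)
  have hs02x : s 0 2 ≠ x := hs00 ▸ hs.ne (by decide)
  have hs02z₂ : s 0 2 ≠ z₂ := hs01 ▸ hs.ne (by decide)
  have hs21y : s 2 1 ≠ y := hs11 ▸ hs.ne (by decide)
  have hs21z₂ : s 2 1 ≠ z₂ := hs01 ▸ hs.ne (by decide)
  have hs20x : s 2 0 ≠ x := hs00 ▸ hs.ne (by decide)
  have hs20z₃ : s 2 0 ≠ z₃ := hs10 ▸ hs.ne (by decide)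
  have hs12y : s 1 2 ≠ y := hs11 ▸ hs.ne (by decide)
  have hs12z₃ : s 1 2 ≠ z₃ := hs10 ▸ hs.ne (by decide)
  -- the six bridges
  have B1 : r 0 2 = a₁ := third_eq S hRr0 hRq0 h1.ne mxr mz₁r mxq mz₁q
    (mRr0 2) (mRq0 2) hr02x hr02z₁ ha₁x ha₁z₁
  have B2 : r 2 1 = b₁ := third_eq S hCr1 hCq1 h1'.ne mz₁r' myr mz₁q' myq
    (mCr1 2) (mCq1 2) hr21z₁ hr21y hb₁z₁ hb₁y
  have B3 : s 0 2 = a₂ := third_eq S hRs0 hCq0 h2.ne mxs mz₂s mxq' mz₂q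
    (mRs0 2) (mCq0 2) hs02x hs02z₂ ha₂x ha₂z₂
  have B4 : s 2 1 = b₂ := third_eq S hCs1 hRq1 h2'.ne mz₂s' mys mz₂q' myq'
    (mCs1 2) (mRq1 2) hs21z₂ hs21y hb₂z₂ hb₂y
  have B5 : s 2 0 = a₃ := third_eq S hCs0 hCr0 h3.ne mxs' mz₃s mxr' mz₃r
    (mCs0 2) (mCr0 2) hs20x hs20z₃ ha₃x ha₃z₃
  have B6 : s 1 2 = b₃ := third_eq S hRs1 hRr1 h3'.ne mz₃s' mys' mz₃r' myr'
    (mRs1 2) (mRr1 2) hs12z₃ hs12y hb₃z₃ hb₃y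
  -- adjacencies to x
  have hxa₁ : (collGraph Ls).Adj x a₁ := by
    have h := (hq.adj_row (show (0:Fin 3) ≠ 2 by decide) : (collGraph Ls).Adj (q 0 0) (q 0 2))
    rwa [hq00] at h
  have hxa₂ : (collGraph Ls).Adj x a₂ := by
    have h := (hq.adj_col (show (0:Fin 3) ≠ 2 by decide) : (collGraph Ls).Adj (q 0 0) (q 2 0))
    rwa [hq00] at h
  have hxa₃ : (collGraph Ls).Adj x a₃ := by
    have h := (hr.adj_col (show (0:Fin 3) ≠ 2 by decide) : (collGraph Ls).Adj (r 0 0) (r 2 0))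
    rwa [hr00] at h
  -- adjacencies within grid q
  have hz₁b₁ : (collGraph Ls).Adj z₁ b₁ := by
    have h := (hq.adj_col (show (0:Fin 3) ≠ 2 by decide) : (collGraph Ls).Adj (q 0 1) (q 2 1))
    rwa [hq01] at h
  have ha₂b₁ : (collGraph Ls).Adj a₂ b₁ :=
    (hq.adj_row (show (0:Fin 3) ≠ 1 by decide) : (collGraph Ls).Adj (q 2 0) (q 2 1))
  have hz₂b₂ : (collGraph Ls).Adj z₂ b₂ := by
    have h := (hq.adj_row (show (0:Fin 3) ≠ 2 by decide) : (collGraph Ls).Adj (q 1 0) (q 1 2))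
    rwa [hq10] at h
  have ha₁b₂ : (collGraph Ls).Adj a₁ b₂ :=
    (hq.adj_col (show (0:Fin 3) ≠ 1 by decide) : (collGraph Ls).Adj (q 0 2) (q 1 2))
  have ha₁e₁₂ : (collGraph Ls).Adj a₁ e₁₂ :=
    (hq.adj_col (show (0:Fin 3) ≠ 2 by decide) : (collGraph Ls).Adj (q 0 2) (q 2 2))
  have ha₂e₁₂ : (collGraph Ls).Adj a₂ e₁₂ :=
    (hq.adj_row (show (0:Fin 3) ≠ 2 by decide) : (collGraph Ls).Adj (q 2 0) (q 2 2))
  have hyb₁ : (collGraph Ls).Adj y b₁ := by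
    have h := (hq.adj_col (show (1:Fin 3) ≠ 2 by decide) : (collGraph Ls).Adj (q 1 1) (q 2 1))
    rwa [hq11] at h
  have hyb₂ : (collGraph Ls).Adj y b₂ := by
    have h := (hq.adj_row (show (1:Fin 3) ≠ 2 by decide) : (collGraph Ls).Adj (q 1 1) (q 1 2))
    rwa [hq11] at h
  -- adjacencies within grid r
  have hz₃b₃ : (collGraph Ls).Adj z₃ b₃ := by
    have h := (hr.adj_row (show (0:Fin 3) ≠ 2 by decide) : (collGraph Ls).Adj (r 1 0) (r 1 2))
    rwa [hr10] at h
  have ha₃b₁ : (collGraph Ls).Adj a₃ b₁ := by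
    have h := (hr.adj_row (show (0:Fin 3) ≠ 1 by decide) : (collGraph Ls).Adj (r 2 0) (r 2 1))
    rwa [B2] at h
  have ha₁b₃ : (collGraph Ls).Adj a₁ b₃ := by
    have h := (hr.adj_col (show (0:Fin 3) ≠ 1 by decide) : (collGraph Ls).Adj (r 0 2) (r 1 2))
    rwa [B1] at h
  have ha₁e₁₃ : (collGraph Ls).Adj a₁ e₁₃ := by
    have h := (hr.adj_col (show (0:Fin 3) ≠ 2 by decide) : (collGraph Ls).Adj (r 0 2) (r 2 2))
    rwa [B1] at h
  have ha₃e₁₃ : (collGraph Ls).Adj a₃ e₁₃ :=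
    (hr.adj_row (show (0:Fin 3) ≠ 2 by decide) : (collGraph Ls).Adj (r 2 0) (r 2 2))
  have hyb₃ : (collGraph Ls).Adj y b₃ := by
    have h := (hr.adj_row (show (1:Fin 3) ≠ 2 by decide) : (collGraph Ls).Adj (r 1 1) (r 1 2))
    rwa [hr11] at h
  -- adjacencies within grid s
  have ha₃b₂ : (collGraph Ls).Adj a₃ b₂ := by
    have h := (hs.adj_row (show (0:Fin 3) ≠ 1 by decide) : (collGraph Ls).Adj (s 2 0) (s 2 1))
    rwa [B5, B4] at h
  have ha₂b₃ : (collGraph Ls).Adj a₂ b₃ := by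
    have h := (hs.adj_col (show (0:Fin 3) ≠ 1 by decide) : (collGraph Ls).Adj (s 0 2) (s 1 2))
    rwa [B3, B6] at h
  have ha₂e₂₃ : (collGraph Ls).Adj a₂ e₂₃ := by
    have h := (hs.adj_col (show (0:Fin 3) ≠ 2 by decide) : (collGraph Ls).Adj (s 0 2) (s 2 2))
    rwa [B3] at h
  have ha₃e₂₃ : (collGraph Ls).Adj a₃ e₂₃ := by
    have h := (hs.adj_row (show (0:Fin 3) ≠ 2 by decide) : (collGraph Ls).Adj (s 2 0) (s 2 2))
    rwa [B5] at h
  -- the three extra adjacencies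
  have hz₃e₁₂ : (collGraph Ls).Adj z₃ e₁₂ := by
    refine hq.extra_adj S ?_ ?_ ?_ ?_
    · rwa [hq00]
    · rwa [hq11]
    · rw [hq01]; exact Ne.symm h13
    · rw [hq10]; exact Ne.symm h23
  have hz₂e₁₃ : (collGraph Ls).Adj z₂ e₁₃ := by
    refine hr.extra_adj S ?_ ?_ ?_ ?_
    · rwa [hr00]
    · rwa [hr11]
    · rw [hr01]; exact Ne.symm h12
    · rw [hr10]; exact h23
  have hz₁e₂₃ : (collGraph Ls).Adj z₁ e₂₃ := by
    refine hs.extra_adj S ?_ ?_ ?_ ?_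
    · rwa [hs00]
    · rwa [hs11]
    · rw [hs01]; exact h12
    · rw [hs10]; exact h13
  -- distances from x and y to grid points
  have hdxe₂₃ : (collGraph Ls).dist x e₂₃ = 2 := by
    have h := (hs.dist_diag S (show (0:Fin 3) ≠ 2 by decide) (show (0:Fin 3) ≠ 2 by decide) :
      (collGraph Ls).dist (s 0 0) (s 2 2) = 2)
    rwa [hs00] at h
  have hdye₂₃ : (collGraph Ls).dist y e₂₃ = 2 := by
    have h := (hs.dist_diag S (show (1:Fin 3) ≠ 2 by decide) (show (1:Fin 3) ≠ 2 by decide) :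
      (collGraph Ls).dist (s 1 1) (s 2 2) = 2)
    rwa [hs11] at h
  have hnye₂₃ : ¬ (collGraph Ls).Adj y e₂₃ := not_adj_of_dist_two S hdye₂₃
  have hdz₂e₂₃ : (collGraph Ls).dist z₂ e₂₃ = 2 := by
    have h := (hs.dist_diag S (show (0:Fin 3) ≠ 2 by decide) (show (1:Fin 3) ≠ 2 by decide) :
      (collGraph Ls).dist (s 0 1) (s 2 2) = 2)
    rwa [hs01] at h
  have hdz₃e₂₃ : (collGraph Ls).dist z₃ e₂₃ = 2 := by
    have h := (hs.dist_diag S (show (1:Fin 3) ≠ 2 by decide) (show (0:Fin 3) ≠ 2 by decide) :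
      (collGraph Ls).dist (s 1 0) (s 2 2) = 2)
    rwa [hs10] at h
  have hdz₂z₁ : (collGraph Ls).dist z₂ z₁ = 2 := by
    have h := (hq.dist_diag S (show (1:Fin 3) ≠ 0 by decide) (show (0:Fin 3) ≠ 1 by decide) :
      (collGraph Ls).dist (q 1 0) (q 0 1) = 2)
    rwa [hq10, hq01] at h
  have hdz₃z₁ : (collGraph Ls).dist z₃ z₁ = 2 := by
    have h := (hr.dist_diag S (show (1:Fin 3) ≠ 0 by decide) (show (0:Fin 3) ≠ 1 by decide) :
      (collGraph Ls).dist (r 1 0) (r 0 1) = 2)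
    rwa [hr10, hr01] at h
  -- the line T through z₁ and e₂₃, and w
  obtain ⟨T, hT, hz₁T, he₂₃T⟩ := exists_line_adj hz₁e₂₃
  obtain ⟨w, hwT, hwz₁, hwe₂₃, hTeq⟩ := line_third S hT hz₁T he₂₃T hz₁e₂₃.ne
  have hdxw : (collGraph Ls).dist x w = 2 :=
    one_two_two S hT hz₁T he₂₃T hwT hz₁e₂₃.ne (Ne.symm hwz₁) (Ne.symm hwe₂₃)
      (dist_adj S h1) hdxe₂₃
  have hz₁w : (collGraph Ls).Adj z₁ w := adj_of_mem hT hz₁T hwT (Ne.symm hwz₁)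
  have hz₂w : (collGraph Ls).Adj z₂ w :=
    adj_of_twos S hT hz₁T he₂₃T hwT hz₁e₂₃.ne (Ne.symm hwz₁) (Ne.symm hwe₂₃)
      hdz₂z₁ hdz₂e₂₃
  have hz₃w : (collGraph Ls).Adj z₃ w :=
    adj_of_twos S hT hz₁T he₂₃T hwT hz₁e₂₃.ne (Ne.symm hwz₁) (Ne.symm hwe₂₃)
      hdz₃z₁ hdz₃e₂₃
  have hwe : (collGraph Ls).Adj w e₂₃ := adj_of_mem hT hwT he₂₃T hwe₂₃
  -- cross-grid distinctness of the a-points and z/a cross facts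
  have hz₂a₁ : z₂ ≠ a₁ := by
    have h := (hq.ne (by decide) : q 1 0 ≠ q 0 2); rwa [hq10] at h
  have hz₃a₁ : z₃ ≠ a₁ := by
    have h := (hr.ne (by decide) : r 1 0 ≠ r 0 2); rw [hr10, B1] at h; exact h
  have hz₁a₂ : z₁ ≠ a₂ := by
    have h := (hq.ne (by decide) : q 0 1 ≠ q 2 0); rwa [hq01] at h
  have hz₃a₂ : z₃ ≠ a₂ := by
    have h := (hs.ne (by decide) : s 1 0 ≠ s 0 2); rw [hs10, B3] at h; exact h
  have hz₁a₃ : z₁ ≠ a₃ := by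
    have h := (hr.ne (by decide) : r 0 1 ≠ r 2 0); rwa [hr01] at h
  have hz₂a₃ : z₂ ≠ a₃ := by
    have h := (hs.ne (by decide) : s 0 1 ≠ s 2 0); rw [hs01, B5] at h; exact h
  have ha₁a₂ : a₁ ≠ a₂ := hq.ne (by decide)
  have ha₁a₃ : a₁ ≠ a₃ := by
    have h := (hr.ne (by decide) : r 0 2 ≠ r 2 0); rwa [B1] at h
  have ha₂a₃ : a₂ ≠ a₃ := by
    have h := (hs.ne (by decide) : s 0 2 ≠ s 2 0); rw [B3, B5] at h; exact h
  -- distances x to partners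
  have hdxb₁ : (collGraph Ls).dist x b₁ = 2 := by
    have h := (hq.dist_diag S (show (0:Fin 3) ≠ 2 by decide) (show (0:Fin 3) ≠ 1 by decide) :
      (collGraph Ls).dist (q 0 0) (q 2 1) = 2)
    rwa [hq00] at h
  have hdxb₂ : (collGraph Ls).dist x b₂ = 2 := by
    have h := (hq.dist_diag S (show (0:Fin 3) ≠ 1 by decide) (show (0:Fin 3) ≠ 2 by decide) :
      (collGraph Ls).dist (q 0 0) (q 1 2) = 2)
    rwa [hq00] at h
  have hdxb₃ : (collGraph Ls).dist x b₃ = 2 := by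
    have h := (hr.dist_diag S (show (0:Fin 3) ≠ 1 by decide) (show (0:Fin 3) ≠ 2 by decide) :
      (collGraph Ls).dist (r 0 0) (r 1 2) = 2)
    rwa [hr00] at h
  have hdxe₁₂ : (collGraph Ls).dist x e₁₂ = 2 := by
    have h := (hq.dist_diag S (show (0:Fin 3) ≠ 2 by decide) (show (0:Fin 3) ≠ 2 by decide) :
      (collGraph Ls).dist (q 0 0) (q 2 2) = 2)
    rwa [hq00] at h
  have hdxe₁₃ : (collGraph Ls).dist x e₁₃ = 2 := by
    have h := (hr.dist_diag S (show (0:Fin 3) ≠ 2 by decide) (show (0:Fin 3) ≠ 2 by decide) :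
      (collGraph Ls).dist (r 0 0) (r 2 2) = 2)
    rwa [hr00] at h
  -- distinctness facts needed for nodup
  have hyb₁' : y ≠ b₁ := by
    have h := (hq.ne (by decide) : q 1 1 ≠ q 2 1); rwa [hq11] at h
  have hyb₂' : y ≠ b₂ := by
    have h := (hq.ne (by decide) : q 1 1 ≠ q 1 2); rwa [hq11] at h
  have hyb₃' : y ≠ b₃ := by
    have h := (hr.ne (by decide) : r 1 1 ≠ r 1 2); rwa [hr11] at h
  have hye₁₂ : y ≠ e₁₂ := by
    have h := (hq.ne (by decide) : q 1 1 ≠ q 2 2); rwa [hq11] at h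
  have hye₁₃ : y ≠ e₁₃ := by
    have h := (hr.ne (by decide) : r 1 1 ≠ r 2 2); rwa [hr11] at h
  have hye₂₃ : y ≠ e₂₃ := by
    have h := (hs.ne (by decide) : s 1 1 ≠ s 2 2); rwa [hs11] at h
  have hyw : y ≠ w := fun hh => hnye₂₃ (by rw [hh]; exact hwe)
  have hb₁b₂ : b₁ ≠ b₂ := hq.ne (by decide)
  have hb₁b₃ : b₁ ≠ b₃ := by
    have h := (hr.ne (by decide) : r 2 1 ≠ r 1 2); rwa [B2] at h
  have hb₂b₃ : b₂ ≠ b₃ := by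
    have h := (hs.ne (by decide) : s 2 1 ≠ s 1 2); rw [B4, B6] at h; exact h
  have hb₁e₁₂ : b₁ ≠ e₁₂ := hq.ne (by decide)
  have hb₁e₁₃ : b₁ ≠ e₁₃ := by
    have h := (hr.ne (by decide) : r 2 1 ≠ r 2 2); rwa [B2] at h
  have hb₁e₂₃ : b₁ ≠ e₂₃ := fun hh => hnye₂₃ (by rw [← hh]; exact hyb₁)
  have hnz₂b₁ : ¬ (collGraph Ls).Adj z₂ b₁ := by
    have h := (hq.dist_diag S (show (1:Fin 3) ≠ 2 by decide) (show (0:Fin 3) ≠ 1 by decide) :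
      (collGraph Ls).dist (q 1 0) (q 2 1) = 2)
    rw [hq10] at h
    exact not_adj_of_dist_two S h
  have hb₁w : b₁ ≠ w := fun hh => hnz₂b₁ (by rw [hh]; exact hz₂w)
  have hb₂e₁₂ : b₂ ≠ e₁₂ := hq.ne (by decide)
  have hnye₁₃ : ¬ (collGraph Ls).Adj y e₁₃ := by
    have h := (hr.dist_diag S (show (1:Fin 3) ≠ 2 by decide) (show (1:Fin 3) ≠ 2 by decide) :
      (collGraph Ls).dist (r 1 1) (r 2 2) = 2)
    rw [hr11] at h
    exact not_adj_of_dist_two S h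
  have hb₂e₁₃ : b₂ ≠ e₁₃ := fun hh => hnye₁₃ (by rw [← hh]; exact hyb₂)
  have hb₂e₂₃ : b₂ ≠ e₂₃ := by
    have h := (hs.ne (by decide) : s 2 1 ≠ s 2 2); rwa [B4] at h
  have hnz₁b₂ : ¬ (collGraph Ls).Adj z₁ b₂ := by
    have h := (hq.dist_diag S (show (0:Fin 3) ≠ 1 by decide) (show (1:Fin 3) ≠ 2 by decide) :
      (collGraph Ls).dist (q 0 1) (q 1 2) = 2)
    rw [hq01] at h
    exact not_adj_of_dist_two S h
  have hb₂w : b₂ ≠ w := fun hh => hnz₁b₂ (by rw [hh]; exact hz₁w)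
  have hnye₁₂ : ¬ (collGraph Ls).Adj y e₁₂ := by
    have h := (hq.dist_diag S (show (1:Fin 3) ≠ 2 by decide) (show (1:Fin 3) ≠ 2 by decide) :
      (collGraph Ls).dist (q 1 1) (q 2 2) = 2)
    rw [hq11] at h
    exact not_adj_of_dist_two S h
  have hb₃e₁₂ : b₃ ≠ e₁₂ := fun hh => hnye₁₂ (by rw [← hh]; exact hyb₃)
  have hb₃e₁₃ : b₃ ≠ e₁₃ := hr.ne (by decide)
  have hb₃e₂₃ : b₃ ≠ e₂₃ := by
    have h := (hs.ne (by decide) : s 1 2 ≠ s 2 2); rwa [B6] at h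
  have hnz₁b₃ : ¬ (collGraph Ls).Adj z₁ b₃ := by
    have h := (hr.dist_diag S (show (0:Fin 3) ≠ 1 by decide) (show (1:Fin 3) ≠ 2 by decide) :
      (collGraph Ls).dist (r 0 1) (r 1 2) = 2)
    rw [hr01] at h
    exact not_adj_of_dist_two S h
  have hb₃w : b₃ ≠ w := fun hh => hnz₁b₃ (by rw [hh]; exact hz₁w)
  have hnz₃e₁₃ : ¬ (collGraph Ls).Adj z₃ e₁₃ := by
    have h := (hr.dist_diag S (show (1:Fin 3) ≠ 2 by decide) (show (0:Fin 3) ≠ 2 by decide) :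
      (collGraph Ls).dist (r 1 0) (r 2 2) = 2)
    rw [hr10] at h
    exact not_adj_of_dist_two S h
  have he₁₂e₁₃ : e₁₂ ≠ e₁₃ := fun hh => hnz₃e₁₃ (by rw [← hh]; exact hz₃e₁₂)
  have hnz₃e₂₃ : ¬ (collGraph Ls).Adj z₃ e₂₃ := not_adj_of_dist_two S hdz₃e₂₃
  have he₁₂e₂₃ : e₁₂ ≠ e₂₃ := fun hh => hnz₃e₂₃ (by rw [← hh]; exact hz₃e₁₂)
  have hnz₂e₂₃ : ¬ (collGraph Ls).Adj z₂ e₂₃ := not_adj_of_dist_two S hdz₂e₂₃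
  have he₁₃e₂₃ : e₁₃ ≠ e₂₃ := fun hh => hnz₂e₂₃ (by rw [← hh]; exact hz₂e₁₃)
  have hnz₂e₁₂ : ¬ (collGraph Ls).Adj z₂ e₁₂ := by
    have h := (hq.dist_diag S (show (1:Fin 3) ≠ 2 by decide) (show (0:Fin 3) ≠ 2 by decide) :
      (collGraph Ls).dist (q 1 0) (q 2 2) = 2)
    rw [hq10] at h
    exact not_adj_of_dist_two S h
  have he₁₂w : e₁₂ ≠ w := fun hh => hnz₂e₁₂ (by rw [hh]; exact hz₂w)
  have he₁₃w : e₁₃ ≠ w := fun hh => hnz₃e₁₃ (by rw [hh]; exact hz₃w)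
  have he₂₃w : e₂₃ ≠ w := fun hh => hwe₂₃ hh.symm
  -- assemble the list
  refine ⟨[y, b₁, b₂, b₃, e₁₂, e₁₃, e₂₃, w], rfl, ?_, ?_⟩
  · simp only [List.nodup_cons, List.mem_cons, List.mem_singleton, List.not_mem_nil,
      or_false, not_or, List.nodup_nil, and_true]
    exact ⟨⟨hyb₁', hyb₂', hyb₃', hye₁₂, hye₁₃, hye₂₃, hyw⟩,
      ⟨hb₁b₂, hb₁b₃, hb₁e₁₂, hb₁e₁₃, hb₁e₂₃, hb₁w⟩,
      ⟨hb₂b₃, hb₂e₁₂, hb₂e₁₃, hb₂e₂₃, hb₂w⟩,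
      ⟨hb₃e₁₂, hb₃e₁₃, hb₃e₂₃, hb₃w⟩,
      ⟨he₁₂e₁₃, he₁₂e₂₃, he₁₂w⟩,
      ⟨he₁₃e₂₃, he₁₃w⟩,
      ⟨he₂₃w, not_false⟩⟩
  · intro u hu
    simp only [List.mem_cons, List.mem_singleton, List.not_mem_nil, or_false] at hu
    rcases hu with rfl | rfl | rfl | rfl | rfl | rfl | rfl | rfl
    · exact ⟨hxy, z₁, z₂, z₃, h12, h13, h23, ⟨h1, h1'⟩, ⟨h2, h2'⟩, ⟨h3, h3'⟩⟩
    · exact ⟨hdxb₁, z₁, a₂, a₃, hz₁a₂, hz₁a₃, ha₂a₃,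
        ⟨h1, hz₁b₁⟩, ⟨hxa₂, ha₂b₁⟩, ⟨hxa₃, ha₃b₁⟩⟩
    · exact ⟨hdxb₂, z₂, a₁, a₃, hz₂a₁, hz₂a₃, ha₁a₃,
        ⟨h2, hz₂b₂⟩, ⟨hxa₁, ha₁b₂⟩, ⟨hxa₃, ha₃b₂⟩⟩
    · exact ⟨hdxb₃, z₃, a₁, a₂, hz₃a₁, hz₃a₂, ha₁a₂,
        ⟨h3, hz₃b₃⟩, ⟨hxa₁, ha₁b₃⟩, ⟨hxa₂, ha₂b₃⟩⟩
    · exact ⟨hdxe₁₂, a₁, a₂, z₃, ha₁a₂, Ne.symm hz₃a₁, Ne.symm hz₃a₂,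
        ⟨hxa₁, ha₁e₁₂⟩, ⟨hxa₂, ha₂e₁₂⟩, ⟨h3, hz₃e₁₂⟩⟩
    · exact ⟨hdxe₁₃, a₁, a₃, z₂, ha₁a₃, Ne.symm hz₂a₁, Ne.symm hz₂a₃,
        ⟨hxa₁, ha₁e₁₃⟩, ⟨hxa₃, ha₃e₁₃⟩, ⟨h2, hz₂e₁₃⟩⟩
    · exact ⟨hdxe₂₃, a₂, a₃, z₁, ha₂a₃, Ne.symm hz₁a₂, Ne.symm hz₁a₃,
        ⟨hxa₂, ha₂e₂₃⟩, ⟨hxa₃, ha₃e₂₃⟩, ⟨h1, hz₁e₂₃⟩⟩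
    · exact ⟨hdxw, z₁, z₂, z₃, h12, h13, h23,
        ⟨h1, hz₁w⟩, ⟨h2, hz₂w⟩, ⟨h3, hz₃w⟩⟩

end NearHex
namespace NearHex

open SimpleGraph Set Finset

open scoped Classical

variable {P : Type*} {Ls : Set (Set P)}

lemma comSet_finite (S : Setup Ls) (x y : P) : (comSet Ls x y).Finite :=
  Set.Finite.subset (nbrs_finite S x) (fun w hw => hw.1)

lemma mu_ge_three (S : Setup Ls) {x u : P} (h : threeCommons Ls x u) :
    3 ≤ (comSet Ls x u).ncard := by
  obtain ⟨w₁, w₂, w₃, h12, h13, h23, hw1, hw2, hw3⟩ := h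
  have hsub : ({w₁, w₂, w₃} : Set P) ⊆ comSet Ls x u := by
    intro w hw
    rcases hw with rfl | rfl | rfl
    · exact hw1
    · exact hw2
    · exact hw3
  have h3 : ({w₁, w₂, w₃} : Set P).ncard = 3 := by
    rw [Set.ncard_insert_of_notMem (by simp [h12, h13]),
      Set.ncard_insert_of_notMem (by simp [h23]), Set.ncard_singleton]
  rw [← h3]
  exact Set.ncard_le_ncard hsub (comSet_finite S x u)

lemma no_three_commons [Fintype P] (S : Setup Ls)
    (hdiam3 : ∃ u v : P, (collGraph Ls).dist u v = 3) :
    ∀ x y : P, (collGraph Ls).dist x y = 2 → ¬ threeCommons Ls x y := by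
  intro x y hxy hthree
  obtain ⟨z₁, z₂, z₃, h12, h13, h23, ⟨ha1, ha1'⟩, ⟨ha2, ha2'⟩, ⟨ha3, ha3'⟩⟩ := hthree
  obtain ⟨l, hlen, hnodup, hprop⟩ :=
    eight_partners S hxy ha1 ha1' ha2 ha2' ha3 ha3' h12 h13 h23
  set T := l.toFinset with hTdef
  have hTcard : T.card = 8 := by
    rw [hTdef, List.toFinset_card_of_nodup hnodup, hlen]
  have hTsub : T ⊆ sphF Ls x 2 := by
    intro u hu
    exact mem_sphF.mpr (hprop u (List.mem_toFinset.mp hu)).1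
  have hmu3 : ∀ u ∈ T, 3 ≤ (comSet Ls x u).ncard := by
    intro u hu
    exact mu_ge_three S (hprop u (List.mem_toFinset.mp hu)).2
  have hsum := sum_mu S x
  have hsplit : ∑ u ∈ sphF Ls x 2 \ T, (comSet Ls x u).ncard
      + ∑ u ∈ T, (comSet Ls x u).ncard = 24 := by
    rw [Finset.sum_sdiff hTsub, hsum]
  have hT24 : 24 ≤ ∑ u ∈ T, (comSet Ls x u).ncard := by
    calc (24 : ℕ) = 8 * 3 := by norm_num
    _ = ∑ _u ∈ T, 3 := by rw [Finset.sum_const, hTcard, smul_eq_mul]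
    _ ≤ ∑ u ∈ T, (comSet Ls x u).ncard := Finset.sum_le_sum hmu3
  have hempty : sphF Ls x 2 \ T = ∅ := by
    by_contra hne
    obtain ⟨u, hu⟩ := Finset.nonempty_of_ne_empty hne
    have hu2 : u ∈ sphF Ls x 2 := (Finset.mem_sdiff.mp hu).1
    have h1le : 1 ≤ (comSet Ls x u).ncard := (profile_two S (mem_sphF.mp hu2)).1
    have hs1 : (comSet Ls x u).ncard ≤ ∑ w ∈ sphF Ls x 2 \ T, (comSet Ls x w).ncard :=
      Finset.single_le_sum (f := fun w => (comSet Ls x w).ncard)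
        (fun i _ => Nat.zero_le _) hu
    have : 1 ≤ ∑ w ∈ sphF Ls x 2 \ T, (comSet Ls x w).ncard := le_trans h1le hs1
    omega
  have hn2x : (sphF Ls x 2).card = 8 := by
    have hsub2 : sphF Ls x 2 ⊆ T := Finset.sdiff_eq_empty_iff_subset.mp hempty
    rw [Finset.Subset.antisymm hsub2 hTsub, hTcard]
  have hN : 9 * 8 = 3 * Fintype.card P + 27 := by
    have := n2_const S x; rwa [hn2x] at this
  obtain ⟨u, v, huv⟩ := hdiam3
  have hn2u : (sphF Ls u 2).card = 8 := by
    have := n2_const S u; omega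
  have hn3u := updown_count S u
  rw [hn2u] at hn3u
  have hvmem : v ∈ sphF Ls u 3 := mem_sphF.mpr huv
  have : 0 < (sphF Ls u 3).card := Finset.card_pos.mpr ⟨v, hvmem⟩
  omega

end NearHex
namespace NearHex

open SimpleGraph Set Finset

open scoped Classical

variable {P : Type*} {Ls : Set (Set P)}

lemma mu_le_two (S : Setup Ls)
    (hm : ∀ x y : P, (collGraph Ls).dist x y = 2 → ¬ threeCommons Ls x y)
    {x y : P} (h2 : (collGraph Ls).dist x y = 2) : (comSet Ls x y).ncard ≤ 2 := by
  by_contra hgt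
  push_neg at hgt
  have hfin := comSet_finite S x y
  have hcard : 3 ≤ hfin.toFinset.card := by
    rw [← Set.ncard_eq_toFinset_card _ hfin]; omega
  obtain ⟨t, hts, htc⟩ := Finset.exists_subset_card_eq hcard
  obtain ⟨a, b, c, hab, hac, hbc, rfl⟩ := Finset.card_eq_three.mp htc
  have hmem : ∀ w ∈ ({a, b, c} : Finset P), w ∈ comSet Ls x y := by
    intro w hw
    have := hts hw
    rwa [Set.Finite.mem_toFinset] at this
  exact hm x y h2 ⟨a, b, c, hab, hac, hbc,
    hmem a (by simp), hmem b (by simp), hmem c (by simp)⟩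

lemma hmu_of_no3 (S : Setup Ls)
    (hm : ∀ x y : P, (collGraph Ls).dist x y = 2 → ¬ threeCommons Ls x y) :
    ∀ u v w₁ w₂ w₃ : P, (collGraph Ls).dist u v = 2 →
      (collGraph Ls).Adj u w₁ → (collGraph Ls).Adj w₁ v →
      (collGraph Ls).Adj u w₂ → (collGraph Ls).Adj w₂ v →
      (collGraph Ls).Adj u w₃ → (collGraph Ls).Adj w₃ v →
      w₁ = w₂ ∨ w₁ = w₃ ∨ w₂ = w₃ := by
  intro u v w₁ w₂ w₃ hd ha1 ha1' ha2 ha2' ha3 ha3'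
  by_contra hcon
  push_neg at hcon
  exact hm u v hd ⟨w₁, w₂, w₃, hcon.1, hcon.2.1, hcon.2.2,
    ⟨ha1, ha1'⟩, ⟨ha2, ha2'⟩, ⟨ha3, ha3'⟩⟩

noncomputable def partnersF (Ls : Set (Set P)) [Fintype P] (x : P) : Finset P :=
  (sphF Ls x 2).filter (fun y => 2 ≤ (comSet Ls x y).ncard)

lemma k2_eq [Fintype P] (S : Setup Ls)
    (hm : ∀ x y : P, (collGraph Ls).dist x y = 2 → ¬ threeCommons Ls x y) (x : P) :
    (sphF Ls x 2).card + (partnersF Ls x).card = 24 := by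
  have hsum := sum_mu S x
  have hterm : ∀ y ∈ sphF Ls x 2, (comSet Ls x y).ncard =
      1 + (if 2 ≤ (comSet Ls x y).ncard then 1 else 0) := by
    intro y hy
    have h2 := mem_sphF.mp hy
    have h1 := (profile_two S h2).1
    have hle := mu_le_two S hm h2
    split_ifs with h <;> omega
  rw [Finset.sum_congr rfl hterm, Finset.sum_add_distrib, Finset.sum_const,
    smul_eq_mul, mul_one, ← Finset.card_filter] at hsum
  exact hsum

lemma partner_mem [Fintype P] {x y : P} (hy : y ∈ partnersF Ls x) :
    (collGraph Ls).dist x y = 2 ∧ 2 ≤ (comSet Ls x y).ncard := by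
  rw [partnersF, Finset.mem_filter, mem_sphF] at hy
  exact hy

/-- a grid through a `μ = 2` pair, with `gridSet` description. -/
lemma grid_exists [Fintype P] (S : Setup Ls)
    (hm : ∀ x y : P, (collGraph Ls).dist x y = 2 → ¬ threeCommons Ls x y)
    {x y : P} (hd : (collGraph Ls).dist x y = 2) (hmu2 : 2 ≤ (comSet Ls x y).ncard) :
    ∃ p : Fin 3 → Fin 3 → P, GridData Ls p ∧ p 0 0 = x ∧ p 1 1 = y ∧
      gridSet Ls x y = range2 p := by
  have hfin := comSet_finite S x y
  have hcard : 1 < hfin.toFinset.card := by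
    rw [← Set.ncard_eq_toFinset_card _ hfin]; omega
  rw [Finset.one_lt_card] at hcard
  obtain ⟨z₁, hz₁, z₂, hz₂, hz12⟩ := hcard
  rw [Set.Finite.mem_toFinset] at hz₁ hz₂
  obtain ⟨p, hG, hp00, hp11, _, _⟩ :=
    grid_of_two_common S hd hz₁.1 hz₁.2 hz₂.1 hz₂.2 hz12
  refine ⟨p, hG, hp00, hp11, ?_⟩
  have := grid_regen S (hmu_of_no3 S hm) hG
  rwa [hp00, hp11] at this

lemma fiber_card [Fintype P] (S : Setup Ls)
    (hm : ∀ x y : P, (collGraph Ls).dist x y = 2 → ¬ threeCommons Ls x y)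
    (x : P) {Q : Set P}
    (hQ : Q ∈ (partnersF Ls x).image (fun y => gridSet Ls x y)) :
    ((partnersF Ls x).filter (fun y => gridSet Ls x y = Q)).card = 4 := by
  obtain ⟨y₀, hy₀, hQeq⟩ := Finset.mem_image.mp hQ
  obtain ⟨hd₀, hmu₀⟩ := partner_mem hy₀
  obtain ⟨p, hG, hp00, hp11, hgs⟩ := grid_exists S hm hd₀ hmu₀
  -- membership characterisation of the fiber
  have hmem : ∀ u, (u ∈ (partnersF Ls x).filter (fun y => gridSet Ls x y = Q)) ↔
      (∃ i j : Fin 3, i ≠ 0 ∧ j ≠ 0 ∧ p i j = u) := by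
    intro u
    constructor
    · intro hu
      rw [Finset.mem_filter] at hu
      obtain ⟨hu1, hu2⟩ := hu
      obtain ⟨hdu, hmuu⟩ := partner_mem hu1
      obtain ⟨p', hG', hp00', hp11', hgs'⟩ := grid_exists S hm hdu hmuu
      have humem : u ∈ Q := by
        rw [← hu2, hgs', ← hp11']
        exact mem_range2 p' 1 1
      rw [← hQeq, hgs] at humem
      obtain ⟨⟨i, j⟩, hij⟩ := humem
      have hij' : p i j = u := hij
      refine ⟨i, j, ?_, ?_, hij'⟩
      · intro hi
        have hdd := hG.dist_two_iff S 0 0 i j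
        rw [hp00, hij', hdu] at hdd
        exact ((hdd.mp rfl).1 hi.symm)
      · intro hj
        have hdd := hG.dist_two_iff S 0 0 i j
        rw [hp00, hij', hdu] at hdd
        exact ((hdd.mp rfl).2 hj.symm)
    · rintro ⟨i, j, hi, hj, rfl⟩
      rw [Finset.mem_filter, partnersF, Finset.mem_filter, mem_sphF]
      have hdij : (collGraph Ls).dist x (p i j) = 2 := by
        have := hG.dist_diag S (Ne.symm hi) (Ne.symm hj)
        rwa [hp00] at this
      refine ⟨⟨hdij, ?_⟩, ?_⟩
      · -- two distinct common neighbours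
        have hsub : ({p 0 j, p i 0} : Set P) ⊆ comSet Ls x (p i j) := by
          intro w hw
          rcases hw with rfl | rfl
          · constructor
            · rw [← hp00]; exact hG.adj_row (Ne.symm hj)
            · exact hG.adj_col hi.symm
          · constructor
            · rw [← hp00]; exact hG.adj_col (Ne.symm hi)
            · exact hG.adj_row hj.symm
        have hne : p 0 j ≠ p i 0 := hG.ne (by
          rintro ⟨hii, hjj⟩
          exact hi hii.symm)
        have h2 : ({p 0 j, p i 0} : Set P).ncard = 2 := by
          rw [Set.ncard_insert_of_notMem (by simpa using hne), Set.ncard_singleton]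
        rw [← h2]
        exact Set.ncard_le_ncard hsub (comSet_finite S x (p i j))
      · have := grid_regen_diag S (hmu_of_no3 S hm) hG
          (show (0 : Fin 3) ≠ i from Ne.symm hi) (show (0 : Fin 3) ≠ j from Ne.symm hj)
        rw [hp00] at this
        rw [this, ← hgs, hQeq]
  have hset : (partnersF Ls x).filter (fun y => gridSet Ls x y = Q) =
      {p 1 1, p 1 2, p 2 1, p 2 2} := by
    ext u
    rw [hmem u]
    simp only [Finset.mem_insert, Finset.mem_singleton]
    constructor
    · rintro ⟨i, j, hi, hj, rfl⟩
      fin_cases i <;> fin_cases j <;> simp_all <;> tauto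
    · rintro (rfl | rfl | rfl | rfl)
      · exact ⟨1, 1, by decide, by decide, rfl⟩
      · exact ⟨1, 2, by decide, by decide, rfl⟩
      · exact ⟨2, 1, by decide, by decide, rfl⟩
      · exact ⟨2, 2, by decide, by decide, rfl⟩
  rw [hset]
  rw [Finset.card_insert_of_notMem (by
      simp only [Finset.mem_insert, Finset.mem_singleton]
      push_neg
      exact ⟨hG.ne (by decide), hG.ne (by decide), hG.ne (by decide)⟩),
    Finset.card_insert_of_notMem (by
      simp only [Finset.mem_insert, Finset.mem_singleton]
      push_neg
      exact ⟨hG.ne (by decide), hG.ne (by decide)⟩),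
    Finset.card_insert_of_notMem (by
      simp only [Finset.mem_singleton]
      exact hG.ne (by decide)),
    Finset.card_singleton]

lemma k2_four_g [Fintype P] (S : Setup Ls)
    (hm : ∀ x y : P, (collGraph Ls).dist x y = 2 → ¬ threeCommons Ls x y) (x : P) :
    (partnersF Ls x).card = 4 * ((partnersF Ls x).image (fun y => gridSet Ls x y)).card := by
  rw [Finset.card_eq_sum_card_image (fun y => gridSet Ls x y) (partnersF Ls x)]
  rw [Finset.sum_congr rfl (fun Q hQ => fiber_card S hm x hQ), Finset.sum_const,
    smul_eq_mul, mul_comm]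

end NearHex
namespace NearHex

open SimpleGraph Set Finset

open scoped Classical

variable {P : Type*} {Ls : Set (Set P)}

noncomputable def gridsAll (Ls : Set (Set P)) [Fintype P] : Finset (Set P) :=
  ((Finset.univ : Finset (P × P)).filter (fun uv =>
    (collGraph Ls).dist uv.1 uv.2 = 2 ∧ 2 ≤ (comSet Ls uv.1 uv.2).ncard)).image
    (fun uv => gridSet Ls uv.1 uv.2)

lemma image_eq_filter [Fintype P] (S : Setup Ls)
    (hm : ∀ x y : P, (collGraph Ls).dist x y = 2 → ¬ threeCommons Ls x y) (x : P) :
    (partnersF Ls x).image (fun y => gridSet Ls x y) =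
      (gridsAll Ls).filter (fun Q => x ∈ Q) := by
  ext Q
  constructor
  · intro hQ
    obtain ⟨y, hy, rfl⟩ := Finset.mem_image.mp hQ
    obtain ⟨hd, hmu⟩ := partner_mem hy
    rw [Finset.mem_filter]
    refine ⟨?_, ?_⟩
    · rw [gridsAll, Finset.mem_image]
      exact ⟨(x, y), by rw [Finset.mem_filter]; exact ⟨Finset.mem_univ _, hd, hmu⟩, rfl⟩
    · obtain ⟨p, hG, hp00, hp11, hgs⟩ := grid_exists S hm hd hmu
      rw [hgs, ← hp00]
      exact mem_range2 p 0 0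
  · intro hQ
    rw [Finset.mem_filter] at hQ
    obtain ⟨hQ1, hxQ⟩ := hQ
    rw [gridsAll, Finset.mem_image] at hQ1
    obtain ⟨⟨u, v⟩, huv, rfl⟩ := hQ1
    rw [Finset.mem_filter] at huv
    obtain ⟨-, hd, hmu⟩ := huv
    obtain ⟨p, hG, hp00, hp11, hgs⟩ := grid_exists S hm hd hmu
    rw [hgs] at hxQ
    obtain ⟨⟨i, j⟩, hij⟩ := hxQ
    have hij' : p i j = x := hij
    obtain ⟨i', hi'⟩ : ∃ i' : Fin 3, i' ≠ i := by
      fin_cases i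
      exacts [⟨1, by decide⟩, ⟨0, by decide⟩, ⟨0, by decide⟩]
    obtain ⟨j', hj'⟩ : ∃ j' : Fin 3, j' ≠ j := by
      fin_cases j
      exacts [⟨1, by decide⟩, ⟨0, by decide⟩, ⟨0, by decide⟩]
    rw [Finset.mem_image]
    refine ⟨p i' j', ?_, ?_⟩
    · rw [partnersF, Finset.mem_filter, mem_sphF]
      have hdx : (collGraph Ls).dist x (p i' j') = 2 := by
        have := hG.dist_diag S (Ne.symm hi') (Ne.symm hj')
        rwa [hij'] at this
      refine ⟨hdx, ?_⟩
      have hsub : ({p i j', p i' j} : Set P) ⊆ comSet Ls x (p i' j') := by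
        intro w hw
        rcases hw with rfl | rfl
        · constructor
          · rw [← hij']; exact hG.adj_row (Ne.symm hj')
          · exact hG.adj_col (Ne.symm hi')
        · constructor
          · rw [← hij']; exact hG.adj_col (Ne.symm hi')
          · exact hG.adj_row (Ne.symm hj')
      have hne : p i j' ≠ p i' j := hG.ne (by
        rintro ⟨h1, -⟩
        exact hi' h1.symm)
      have h2c : ({p i j', p i' j} : Set P).ncard = 2 := by
        rw [Set.ncard_insert_of_notMem (by simpa using hne), Set.ncard_singleton]
      rw [← h2c]
      exact Set.ncard_le_ncard hsub (comSet_finite S x (p i' j'))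
    · have := grid_regen_diag S (hmu_of_no3 S hm) hG
        (show i ≠ i' from Ne.symm hi') (show j ≠ j' from Ne.symm hj')
      rw [hij'] at this
      rw [this, hgs]

lemma incidence [Fintype P] (S : Setup Ls)
    (hm : ∀ x y : P, (collGraph Ls).dist x y = 2 → ¬ threeCommons Ls x y) :
    ∑ x : P, ((partnersF Ls x).image (fun y => gridSet Ls x y)).card =
      9 * (gridsAll Ls).card := by
  rw [Finset.sum_congr rfl (fun x _ => by rw [image_eq_filter S hm x])]
  simp only [Finset.card_filter]
  rw [Finset.sum_comm]
  have hQ9 : ∀ Q ∈ gridsAll Ls, (∑ x : P, if x ∈ Q then 1 else 0) = 9 := by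
    intro Q hQ
    rw [gridsAll, Finset.mem_image] at hQ
    obtain ⟨⟨u, v⟩, huv, rfl⟩ := hQ
    rw [Finset.mem_filter] at huv
    obtain ⟨p, hG, hp00, hp11, hgs⟩ := grid_exists S hm huv.2.1 huv.2.2
    rw [hgs, ← Finset.card_filter]
    have hcoe : ↑(Finset.univ.filter (fun x : P => x ∈ range2 p)) = range2 p := by
      ext w; simp
    rw [← Set.ncard_coe_finset ((Finset.univ.filter (fun x : P => x ∈ range2 p))), hcoe,
      range2_ncard hG]
  rw [Finset.sum_congr rfl hQ9, Finset.sum_const, smul_eq_mul, mul_comm]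

lemma dichotomy [Fintype P] (S : Setup Ls)
    (hm : ∀ x y : P, (collGraph Ls).dist x y = 2 → ¬ threeCommons Ls x y) :
    (∀ x y : P, (collGraph Ls).dist x y = 2 → (comSet Ls x y).ncard = 1) ∨
    (∀ x y : P, (collGraph Ls).dist x y = 2 → (comSet Ls x y).ncard = 2) := by
  by_cases hk : ∀ x : P, (partnersF Ls x).card = 0
  · left
    intro x y hd
    have h1 := (profile_two S hd).1
    have hle := mu_le_two S hm hd
    have hne2 : (comSet Ls x y).ncard ≠ 2 := by
      intro h2
      have hy : y ∈ partnersF Ls x := by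
        rw [partnersF, Finset.mem_filter, mem_sphF]
        exact ⟨hd, by omega⟩
      have hp := Finset.card_pos.mpr ⟨y, hy⟩
      have := hk x
      omega
    omega
  · right
    push_neg at hk
    obtain ⟨x₀, hx₀⟩ := hk
    have hn2 := n2_const S (Ls := Ls)
    have hk2 := k2_eq S hm
    have hkconst : ∀ x : P, (partnersF Ls x).card = (partnersF Ls x₀).card := by
      intro x
      have e1 := hn2 x; have e2 := hn2 x₀; have e3 := hk2 x; have e4 := hk2 x₀
      omega
    have hk4 := k2_four_g S hm x₀
    have hgx : ∀ x : P, ((partnersF Ls x).image (fun y => gridSet Ls x y)).card =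
        ((partnersF Ls x₀).image (fun y => gridSet Ls x₀ y)).card := by
      intro x
      have h := k2_four_g S hm x
      have := hkconst x
      omega
    have hinc := incidence S hm
    rw [Finset.sum_congr rfl (fun x _ => hgx x), Finset.sum_const, smul_eq_mul,
      Finset.card_univ] at hinc
    have hsub := Finset.card_le_card (Finset.filter_subset
      (fun y => 2 ≤ (comSet Ls x₀ y).ncard) (sphF Ls x₀ 2))
    have hg₀pos : 1 ≤ ((partnersF Ls x₀).image (fun y => gridSet Ls x₀ y)).card := by
      have : (partnersF Ls x₀).card ≠ 0 := hx₀
      omega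
    have hg₀le : ((partnersF Ls x₀).image (fun y => gridSet Ls x₀ y)).card ≤ 3 := by
      have := hk2 x₀
      have hsub' : (partnersF Ls x₀).card ≤ (sphF Ls x₀ 2).card := by
        rw [partnersF]; exact hsub
      omega
    have hcases : ((partnersF Ls x₀).image (fun y => gridSet Ls x₀ y)).card = 1 ∨
        ((partnersF Ls x₀).image (fun y => gridSet Ls x₀ y)).card = 2 ∨
        ((partnersF Ls x₀).image (fun y => gridSet Ls x₀ y)).card = 3 := by omega
    have hNval := hn2 x₀
    have hk2x₀ := hk2 x₀
    rcases hcases with h | h | h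
    · exfalso; rw [h] at hinc hk4; omega
    · exfalso; rw [h] at hinc hk4; omega
    · rw [h] at hk4
      intro x y hd
      have h1 := (profile_two S hd).1
      have hle2 := mu_le_two S hm hd
      have hcardp : (partnersF Ls x).card = 12 := by
        have := hkconst x; omega
      have hcardn : (sphF Ls x 2).card = 12 := by
        have := hk2 x; omega
      have hpeq : partnersF Ls x = sphF Ls x 2 := by
        refine Finset.eq_of_subset_of_card_le ?_ (by omega)
        rw [partnersF]
        exact Finset.filter_subset _ _
      have hymem : y ∈ partnersF Ls x := by
        rw [hpeq]; exact mem_sphF.mpr hd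
      have := (partner_mem hymem).2
      omega

end NearHex

/-- In a near hexagon of order `(2,2)` there is a constant
`c ∈ {1,2}` such that any two points at distance `2` have exactly `c` common
neighbors. -/
theorem near_hexagon_constant_mu {P : Type*} (N : NearPolygon P 3)
    (hord : N.hasOrder 2 2) :
    ∃ c ∈ ({1, 2} : Set ℕ), ∀ x y : P, (collGraph N.Lines).dist x y = 2 →
      {z : P | (collGraph N.Lines).Adj x z ∧ (collGraph N.Lines).Adj z y}.ncard = c := by
  have S : NearHex.Setup N.Lines :=
    ⟨N.unique_line, N.connected, N.diam_le, N.near,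
      fun L hL => by rw [hord.1 L hL], fun x => by rw [hord.2 x]⟩
  haveI : Finite P := NearHex.finite_P S
  haveI : Fintype P := Fintype.ofFinite P
  have hm := NearHex.no_three_commons S N.diam_eq
  rcases NearHex.dichotomy S hm with h | h
  · exact ⟨1, by simp, fun x y hd => h x y hd⟩
  · exact ⟨2, by simp, fun x y hd => h x y hd⟩
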